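/- arXiv:1612.07304 — 2 statements merged into one kernel-verified Lean document; each statement's English description precedes it below -/
import Mathlib

section
/- For α real, let B^α be the space of locally L² functions v on ℝ³ with norm ‖1_{B(0,1)} v‖₂ + Σ_{k≥0} 2^{αk} ‖1_{A_k} v‖₂ where A_k = {2^k ≤ |x| ≤ 2^{k+1}}. Then for 0 < θ < 1 and p = 2/(1+θ), every v ∈ B^{3θ/2} belongs to the Lorentz space L^{p,1}(ℝ³), with ‖v‖_{L^{p,1}} ≲ ‖v‖_{B^{3θ/2}}. -/
open MeasureTheory Filter
open scoped ENNReal NNReal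

noncomputable section

variable {α : Type*} [MeasurableSpace α]

/-- Nonincreasing rearrangement of `f` with respect to the measure `μ`. -/
def rearr (μ : Measure α) (f : α → ℂ) (t : ℝ) : ℝ≥0∞ :=
  sInf {s : ℝ≥0∞ | μ {x | s < (‖f x‖₊ : ℝ≥0∞)} ≤ ENNReal.ofReal t}

/-- Lorentz quasinorm `L^{p,q}` with respect to the measure `μ`. -/
def lorentzNorm (μ : Measure α) (p : ℝ) (q : ℝ≥0∞) (f : α → ℂ) : ℝ≥0∞ :=
  if q = ∞ then ⨆ (t : ℝ) (_ : 0 < t), ENNReal.ofReal (t ^ (1 / p)) * rearr μ f t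
  else (∫⁻ t in Set.Ioi (0 : ℝ),
      (ENNReal.ofReal (t ^ (1 / p)) * rearr μ f t) ^ q.toReal * (ENNReal.ofReal t)⁻¹) ^
      (1 / q.toReal)

abbrev E3 := EuclideanSpace ℝ (Fin 3)

/-- The dyadic annulus `A_k = {2^k ≤ |x| ≤ 2^{k+1}}` in `ℝ³`. -/
def annulus (k : ℕ) : Set E3 := {x : E3 | 2 ^ (k : ℝ) ≤ ‖x‖ ∧ ‖x‖ ≤ 2 ^ ((k : ℝ) + 1)}

/-- The norm of the space `B^α` in `ℝ³`:
`‖1_{B(0,1)} v‖₂ + Σ_{k ≥ 0} 2^{αk} ‖1_{A_k} v‖₂`. -/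
def Bnorm (α' : ℝ) (v : E3 → ℂ) : ℝ≥0∞ :=
  eLpNorm ((Metric.ball (0 : E3) 1).indicator v) 2 volume +
    ∑' k : ℕ, ENNReal.ofReal (2 ^ (α' * k)) * eLpNorm ((annulus k).indicator v) 2 volume

open Set

namespace BLor

def distf (μ : Measure α) (f : α → ℂ) (s : ℝ≥0∞) : ℝ≥0∞ := μ {x | s < (‖f x‖₊ : ℝ≥0∞)}

lemma distf_antitone {μ : Measure α} {f : α → ℂ} : Antitone (distf μ f) :=
  fun _ _ hst => measure_mono fun _ hx => lt_of_le_of_lt hst hx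

lemma distf_rearr_le (μ : Measure α) (f : α → ℂ) (t : ℝ) :
    distf μ f (rearr μ f t) ≤ ENNReal.ofReal t := by
  set S : Set ℝ≥0∞ := {s | distf μ f s ≤ ENNReal.ofReal t} with hS
  have hre : rearr μ f t = sInf S := rfl
  rw [hre]
  rcases eq_or_lt_of_le (le_top : sInf S ≤ ⊤) with htop | hlt
  · have h0 : distf μ f ⊤ = 0 := by
      have he : {x | (⊤:ℝ≥0∞) < (‖f x‖₊ : ℝ≥0∞)} = (∅ : Set α) := by
        ext x; simp
      simp [distf, he]
    rw [htop, h0]; exact zero_le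
  · set A : {q : ℚ // sInf S < ((Real.toNNReal (q:ℝ)) : ℝ≥0∞)} → Set α :=
      fun q => {x | ((Real.toNNReal ((q:ℚ):ℝ)) : ℝ≥0∞) < (‖f x‖₊ : ℝ≥0∞)} with hA
    have hmono : ∀ (r r' : ℚ), r ≤ r' →
        {x | ((Real.toNNReal (r':ℝ)) : ℝ≥0∞) < (‖f x‖₊ : ℝ≥0∞)} ⊆
        {x | ((Real.toNNReal (r:ℝ)) : ℝ≥0∞) < (‖f x‖₊ : ℝ≥0∞)} := by
      intro r r' h x hx
      have hc : ((Real.toNNReal (r:ℝ)) : ℝ≥0∞) ≤ ((Real.toNNReal (r':ℝ)) : ℝ≥0∞) := by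
        exact_mod_cast Real.toNNReal_le_toNNReal (by exact_mod_cast h)
      exact lt_of_le_of_lt hc hx
    have hsub : {x | sInf S < (‖f x‖₊ : ℝ≥0∞)} ⊆ ⋃ q, A q := by
      intro x hx
      obtain ⟨q, _, h1, h2⟩ := ENNReal.lt_iff_exists_rat_btwn.1 hx
      exact mem_iUnion.2 ⟨⟨q, h1⟩, h2⟩
    have hdir : Directed (· ⊆ ·) A := by
      rintro ⟨q, hq⟩ ⟨q', hq'⟩
      rcases le_total q q' with h | h
      · exact ⟨⟨q, hq⟩, subset_rfl, hmono q q' h⟩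
      · exact ⟨⟨q', hq'⟩, hmono q' q h, subset_rfl⟩
    have hle : ∀ q, μ (A q) ≤ ENNReal.ofReal t := by
      rintro ⟨q, hq⟩
      obtain ⟨s, hsS, hs⟩ := sInf_lt_iff.1 hq
      refine le_trans (measure_mono ?_) hsS
      exact fun x hx => lt_trans hs hx
    calc distf μ f (sInf S) ≤ μ (⋃ q, A q) := measure_mono hsub
      _ = ⨆ q, μ (A q) := Directed.measure_iUnion hdir
      _ ≤ ENNReal.ofReal t := iSup_le hle

lemma rearr_le_iff {μ : Measure α} {f : α → ℂ} {t : ℝ} {s : ℝ≥0∞} :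
    rearr μ f t ≤ s ↔ distf μ f s ≤ ENNReal.ofReal t :=
  ⟨fun h => le_trans (distf_antitone h) (distf_rearr_le μ f t), fun h => sInf_le h⟩

lemma lt_rearr_iff {μ : Measure α} {f : α → ℂ} {t : ℝ} {s : ℝ≥0∞} :
    s < rearr μ f t ↔ ENNReal.ofReal t < distf μ f s := by
  rw [← not_le, ← not_le, rearr_le_iff]

lemma rearr_antitone {μ : Measure α} {f : α → ℂ} : Antitone (rearr μ f) := by
  intro t t' h
  exact sInf_le_sInf (fun s hs => le_trans hs (ENNReal.ofReal_le_ofReal h))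

lemma measurableSet_ofReal_lt (c : ℝ≥0∞) : MeasurableSet {l : ℝ | ENNReal.ofReal l < c} :=
  measurableSet_lt ENNReal.measurable_ofReal measurable_const

lemma layer (c : ℝ≥0∞) :
    ∫⁻ l in Ioi (0:ℝ), ({l : ℝ | ENNReal.ofReal l < c}.indicator (fun _ => (1:ℝ≥0∞))) l = c := by
  rw [lintegral_indicator (measurableSet_ofReal_lt c), Measure.restrict_restrict
    (measurableSet_ofReal_lt c), lintegral_one, Measure.restrict_apply_univ]
  rcases eq_or_ne c ⊤ with rfl | hc
  · have : {l : ℝ | ENNReal.ofReal l < ⊤} = univ := by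
      ext l; simp [ENNReal.ofReal_lt_top]
    rw [this, univ_inter, Real.volume_Ioi]
  · have hset : {l : ℝ | ENNReal.ofReal l < c} ∩ Ioi 0 = Ioo 0 c.toReal := by
      ext l
      simp only [mem_inter_iff, mem_setOf_eq, mem_Ioi, mem_Ioo]
      constructor
      · rintro ⟨h1, h2⟩
        exact ⟨h2, (ENNReal.ofReal_lt_iff_lt_toReal h2.le hc).1 h1⟩
      · rintro ⟨h1, h2⟩
        exact ⟨(ENNReal.ofReal_lt_iff_lt_toReal h1.le hc).2 h2, h1⟩
    rw [hset, Real.volume_Ioo, sub_zero, ENNReal.ofReal_toReal hc]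

lemma cut {a : ℝ} (ha : 0 < a) (ha1 : a < 1) (M : ℝ≥0∞) :
    ∫⁻ t in Ioi (0:ℝ),
        ({t : ℝ | ENNReal.ofReal t < M}.indicator (fun t => ENNReal.ofReal (t ^ (a-1)))) t
      ≤ ENNReal.ofReal a⁻¹ * M ^ a := by
  rcases eq_or_ne M ⊤ with rfl | hM
  · rw [ENNReal.top_rpow_of_pos ha, ENNReal.mul_top
      (ENNReal.ofReal_pos.2 (inv_pos.2 ha)).ne']
    exact le_top
  rw [lintegral_indicator (measurableSet_ofReal_lt M), Measure.restrict_restrict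
    (measurableSet_ofReal_lt M)]
  have hset : {t : ℝ | ENNReal.ofReal t < M} ∩ Ioi 0 = Ioo 0 M.toReal := by
    ext l
    simp only [mem_inter_iff, mem_setOf_eq, mem_Ioi, mem_Ioo]
    constructor
    · rintro ⟨h1, h2⟩
      exact ⟨h2, (ENNReal.ofReal_lt_iff_lt_toReal h2.le hM).1 h1⟩
    · rintro ⟨h1, h2⟩
      exact ⟨(ENNReal.ofReal_lt_iff_lt_toReal h1.le hM).2 h2, h1⟩
  rw [hset]
  rcases eq_or_lt_of_le (ENNReal.toReal_nonneg : 0 ≤ M.toReal) with h0 | h0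
  · rw [← h0]
    simp
  have hint : IntegrableOn (fun t : ℝ => t ^ (a-1)) (Ioo 0 M.toReal) := by
    have h1 := intervalIntegral.intervalIntegrable_rpow' (a := 0) (b := M.toReal)
      (by linarith : (-1:ℝ) < a - 1)
    rw [intervalIntegrable_iff_integrableOn_Ioc_of_le h0.le] at h1
    exact h1.mono_set Ioo_subset_Ioc_self
  have hnn : 0 ≤ᵐ[volume.restrict (Ioo 0 M.toReal)] fun t : ℝ => t ^ (a-1) := by
    refine (ae_restrict_iff' measurableSet_Ioo).2 (ae_of_all _ ?_)
    intro t ht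
    exact Real.rpow_nonneg ht.1.le _
  rw [← ofReal_integral_eq_lintegral_ofReal hint hnn]
  have hval : ∫ t in Ioo 0 M.toReal, t ^ (a-1) = M.toReal ^ a / a := by
    rw [← integral_Ioc_eq_integral_Ioo, ← intervalIntegral.integral_of_le h0.le,
      integral_rpow (Or.inl (by linarith : (-1:ℝ) < a - 1))]
    rw [sub_add_cancel, Real.zero_rpow ha.ne', sub_zero]
  rw [hval, div_eq_inv_mul, ENNReal.ofReal_mul (inv_nonneg.2 ha.le)]
  rw [← ENNReal.ofReal_rpow_of_pos h0, ENNReal.ofReal_toReal hM]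

lemma key_swap {a : ℝ} (ha : 0 < a) (ha1 : a < 1) (μ : Measure α) [SFinite μ] (v : α → ℂ) :
    ∫⁻ t in Ioi (0:ℝ), ENNReal.ofReal (t ^ (a-1)) * rearr μ v t
      ≤ ENNReal.ofReal a⁻¹ * ∫⁻ l in Ioi (0:ℝ), (distf μ v (ENNReal.ofReal l)) ^ a := by
  set Sp : Set (ℝ × ℝ) := {p : ℝ × ℝ | ENNReal.ofReal p.2 < rearr μ v p.1} with hSp
  have hSpm : MeasurableSet Sp := by
    have h1 : Measurable fun p : ℝ × ℝ =>
        (ENNReal.ofReal p.2, rearr μ v p.1) :=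
      (ENNReal.measurable_ofReal.comp measurable_snd).prodMk
        ((rearr_antitone (μ := μ) (f := v)).measurable.comp measurable_fst)
    exact h1 measurableSet_lt'
  set F : ℝ → ℝ → ℝ≥0∞ := fun t l =>
    ENNReal.ofReal (t ^ (a-1)) * Sp.indicator (fun _ => (1:ℝ≥0∞)) (t, l) with hF
  have hFm : AEMeasurable (Function.uncurry F)
      ((volume.restrict (Ioi (0:ℝ))).prod (volume.restrict (Ioi (0:ℝ)))) := by
    refine Measurable.aemeasurable ?_
    exact ((ENNReal.measurable_ofReal.comp
        (measurable_fst.pow_const (a-1))).mul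
      ((measurable_const.indicator hSpm)))
  have step1 : ∀ t : ℝ, ENNReal.ofReal (t ^ (a-1)) * rearr μ v t
      = ∫⁻ l in Ioi (0:ℝ), F t l := by
    intro t
    have : ∀ l : ℝ, F t l = ENNReal.ofReal (t ^ (a-1)) *
        ({l : ℝ | ENNReal.ofReal l < rearr μ v t}.indicator (fun _ => (1:ℝ≥0∞))) l := by
      intro l
      simp only [hF, Set.indicator_apply, hSp, mem_setOf_eq]
    simp only [this]
    rw [lintegral_const_mul' _ _ ENNReal.ofReal_ne_top, layer]
  calc ∫⁻ t in Ioi (0:ℝ), ENNReal.ofReal (t ^ (a-1)) * rearr μ v t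
      = ∫⁻ t in Ioi (0:ℝ), ∫⁻ l in Ioi (0:ℝ), F t l := by
        exact lintegral_congr step1
    _ = ∫⁻ l in Ioi (0:ℝ), ∫⁻ t in Ioi (0:ℝ), F t l := lintegral_lintegral_swap hFm
    _ ≤ ∫⁻ l in Ioi (0:ℝ), ENNReal.ofReal a⁻¹ * (distf μ v (ENNReal.ofReal l)) ^ a := by
        refine lintegral_mono fun l => ?_
        have heq : ∀ t : ℝ, F t l =
            ({t : ℝ | ENNReal.ofReal t < distf μ v (ENNReal.ofReal l)}.indicator
              (fun t => ENNReal.ofReal (t ^ (a-1)))) t := by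
          intro t
          simp only [hF, Set.indicator_apply, hSp, mem_setOf_eq, lt_rearr_iff]
          by_cases h : ENNReal.ofReal t < distf μ v (ENNReal.ofReal l) <;> simp [h]
        simp only [heq]
        exact cut ha ha1 _
    _ = ENNReal.ofReal a⁻¹ * ∫⁻ l in Ioi (0:ℝ), (distf μ v (ENNReal.ofReal l)) ^ a := by
        rw [lintegral_const_mul' _ _ ENNReal.ofReal_ne_top]

lemma mem_ball_or_annulus (x : E3) : x ∈ Metric.ball (0:E3) 1 ∨ ∃ k, x ∈ annulus k := by
  rcases lt_or_ge ‖x‖ 1 with h | h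
  · left; simpa [mem_ball_zero_iff] using h
  · right
    have hx0 : (0:ℝ) < ‖x‖ := lt_of_lt_of_le zero_lt_one h
    set r := Real.logb 2 ‖x‖ with hr
    have hr0 : 0 ≤ r := Real.logb_nonneg one_lt_two h
    have h2r : (2:ℝ) ^ r = ‖x‖ := Real.rpow_logb two_pos (by norm_num) hx0
    refine ⟨⌊r⌋₊, ?_, ?_⟩
    · have h1 : ((⌊r⌋₊ : ℕ) : ℝ) ≤ r := Nat.floor_le hr0
      have := Real.rpow_le_rpow_of_exponent_le one_le_two h1
      rwa [h2r] at this
    · have h2 : r ≤ (⌊r⌋₊ : ℝ) + 1 := (Nat.lt_floor_add_one r).le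
      have := Real.rpow_le_rpow_of_exponent_le one_le_two h2
      rwa [h2r] at this

lemma distf_indicator_eq (S : Set E3) (v : E3 → ℂ) (s : ℝ≥0∞) :
    {x | s < (‖(S.indicator v) x‖₊ : ℝ≥0∞)} = S ∩ {x | s < (‖v x‖₊ : ℝ≥0∞)} := by
  ext x
  by_cases hx : x ∈ S
  · simp [Set.indicator_of_mem hx, hx]
  · simp [Set.indicator_of_notMem hx, hx]

lemma distf_le_pieces (v : E3 → ℂ) (s : ℝ≥0∞) :
    distf volume v s ≤ distf volume ((Metric.ball (0:E3) 1).indicator v) s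
      + ∑' k : ℕ, distf volume ((annulus k).indicator v) s := by
  have hcover : {x | s < (‖v x‖₊ : ℝ≥0∞)} ⊆
      (Metric.ball (0:E3) 1 ∩ {x | s < (‖v x‖₊ : ℝ≥0∞)})
        ∪ ⋃ k : ℕ, (annulus k ∩ {x | s < (‖v x‖₊ : ℝ≥0∞)}) := by
    intro x hx
    rcases mem_ball_or_annulus x with h | ⟨k, hk⟩
    · exact Or.inl ⟨h, hx⟩
    · exact Or.inr (mem_iUnion.2 ⟨k, hk, hx⟩)
  calc distf volume v s
      ≤ volume ((Metric.ball (0:E3) 1 ∩ {x | s < (‖v x‖₊ : ℝ≥0∞)})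
        ∪ ⋃ k : ℕ, (annulus k ∩ {x | s < (‖v x‖₊ : ℝ≥0∞)})) := measure_mono hcover
    _ ≤ volume (Metric.ball (0:E3) 1 ∩ {x | s < (‖v x‖₊ : ℝ≥0∞)})
        + volume (⋃ k : ℕ, (annulus k ∩ {x | s < (‖v x‖₊ : ℝ≥0∞)})) := measure_union_le _ _
    _ ≤ volume (Metric.ball (0:E3) 1 ∩ {x | s < (‖v x‖₊ : ℝ≥0∞)})
        + ∑' k : ℕ, volume (annulus k ∩ {x | s < (‖v x‖₊ : ℝ≥0∞)}) := by
          exact add_le_add le_rfl (measure_iUnion_le (ι := ℕ) _)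
    _ = distf volume ((Metric.ball (0:E3) 1).indicator v) s
        + ∑' k : ℕ, distf volume ((annulus k).indicator v) s := by
          rw [distf, distf_indicator_eq]
          congr 1
          exact tsum_congr fun k => by rw [distf, distf_indicator_eq]

lemma piece_bound {a : ℝ} (ha : 1/2 < a) (ha1 : a < 1) {S : Set E3} {w : E3 → ℂ}
    (hwm : Measurable w) (hsupp : ∀ x, x ∉ S → w x = 0) :
    ∫⁻ l in Ioi (0:ℝ), (distf volume w (ENNReal.ofReal l)) ^ a
      ≤ (1 + ENNReal.ofReal (2*a-1)⁻¹) * (volume S ^ (a - 1/2) * eLpNorm w 2 volume) := by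
  have ha0 : (0:ℝ) < a := by linarith
  set m := volume S with hm
  set N := eLpNorm w 2 volume with hN
  have h1 : ∀ s : ℝ≥0∞, distf volume w s ≤ m := by
    intro s
    refine measure_mono fun x hx => ?_
    have hx' : s < (‖w x‖₊ : ℝ≥0∞) := hx
    by_contra hxS
    rw [hsupp x hxS] at hx'
    simp at hx'
  have h2 : ∀ s : ℝ≥0∞, s ≠ 0 → distf volume w s ≤ s⁻¹ ^ (2:ℝ) * N ^ (2:ℝ) := by
    intro s hs
    refine le_trans (measure_mono fun x (hx : s < (‖w x‖₊ : ℝ≥0∞)) => (le_of_lt hx : s ≤ _)) ?_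
    have := meas_ge_le_mul_pow_eLpNorm_enorm volume (p := 2) (by norm_num) (by norm_num)
      hwm.aestronglyMeasurable hs (fun _ => by simp)
    simp only [ENNReal.toReal_ofNat] at this
    exact this
  by_cases hm0 : m = 0
  · have hz : ∀ l : ℝ, (distf volume w (ENNReal.ofReal l)) ^ a = 0 := by
      intro l
      have : distf volume w (ENNReal.ofReal l) = 0 :=
        le_antisymm (le_trans (h1 _) hm0.le) (zero_le)
      rw [this, ENNReal.zero_rpow_of_pos ha0]
    simp only [hz, lintegral_zero]
    exact zero_le
  by_cases hN0 : N = 0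
  · have hz : ∫⁻ l in Ioi (0:ℝ), (distf volume w (ENNReal.ofReal l)) ^ a
        = ∫⁻ _ in Ioi (0:ℝ), (0:ℝ≥0∞) := by
      refine setLIntegral_congr_fun measurableSet_Ioi (fun l hl => ?_)
      have hd : distf volume w (ENNReal.ofReal l) = 0 := by
        refine le_antisymm (le_trans (h2 _ (ENNReal.ofReal_pos.2 hl).ne') ?_) (zero_le)
        rw [hN0, ENNReal.zero_rpow_of_pos two_pos, mul_zero]
      rw [hd, ENNReal.zero_rpow_of_pos ha0]
    rw [hz, lintegral_zero]
    exact zero_le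
  have hC0 : (1 + ENNReal.ofReal (2*a-1)⁻¹) ≠ 0 := by simp
  by_cases hmtop : m = ⊤
  · refine le_top.trans (le_of_eq ?_)
    rw [hmtop, ENNReal.top_rpow_of_pos (by linarith), ENNReal.top_mul hN0,
      ENNReal.mul_top hC0]
  by_cases hNtop : N = ⊤
  · refine le_top.trans (le_of_eq ?_)
    have hmpos : (0:ℝ≥0∞) < m ^ (a - 1/2) := ENNReal.rpow_pos (pos_iff_ne_zero.2 hm0) hmtop
    rw [hNtop, ENNReal.mul_top hmpos.ne', ENNReal.mul_top hC0]
  -- main case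
  have hmr : 0 < m.toReal := ENNReal.toReal_pos hm0 hmtop
  have hNr : 0 < N.toReal := ENNReal.toReal_pos hN0 hNtop
  set T : ℝ := N.toReal * m.toReal ^ (-(1/2) : ℝ) with hT
  have hT0 : 0 < T := mul_pos hNr (Real.rpow_pos_of_pos hmr _)
  have hofT : ENNReal.ofReal T = N * m ^ (-(1/2) : ℝ) := by
    rw [hT, ENNReal.ofReal_mul hNr.le, ← ENNReal.ofReal_rpow_of_pos hmr,
      ENNReal.ofReal_toReal hNtop, ENNReal.ofReal_toReal hmtop]
  have hsplit : (Ioi (0:ℝ)) = Ioc 0 T ∪ Ioi T := (Ioc_union_Ioi_eq_Ioi hT0.le).symm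
  rw [hsplit, lintegral_union measurableSet_Ioi Ioc_disjoint_Ioi_same]
  have part1 : ∫⁻ l in Ioc (0:ℝ) T, (distf volume w (ENNReal.ofReal l)) ^ a
      ≤ m ^ (a - 1/2) * N := by
    calc ∫⁻ l in Ioc (0:ℝ) T, (distf volume w (ENNReal.ofReal l)) ^ a
        ≤ ∫⁻ _ in Ioc (0:ℝ) T, m ^ a :=
          setLIntegral_mono' measurableSet_Ioc fun l _ => ENNReal.rpow_le_rpow (h1 _) ha0.le
      _ = m ^ a * ENNReal.ofReal T := by
          rw [setLIntegral_const, Real.volume_Ioc, sub_zero]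
      _ = m ^ (a - 1/2) * N := by
          rw [hofT, mul_comm N, ← mul_assoc, ← ENNReal.rpow_add _ _ hm0 hmtop,
            show a + -(1/2) = a - 1/2 from by ring]
  have part2 : ∫⁻ l in Ioi T, (distf volume w (ENNReal.ofReal l)) ^ a
      ≤ ENNReal.ofReal (2*a-1)⁻¹ * (m ^ (a - 1/2) * N) := by
    have hpt : ∀ l ∈ Ioi T, (distf volume w (ENNReal.ofReal l)) ^ a
        ≤ ENNReal.ofReal (l ^ (-(2*a))) * N ^ (2*a) := by
      intro l hl
      have hl0 : (0:ℝ) < l := lt_trans hT0 hl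
      have hb := h2 (ENNReal.ofReal l) (ENNReal.ofReal_pos.2 hl0).ne'
      calc (distf volume w (ENNReal.ofReal l)) ^ a
          ≤ ((ENNReal.ofReal l)⁻¹ ^ (2:ℝ) * N ^ (2:ℝ)) ^ a :=
            ENNReal.rpow_le_rpow hb ha0.le
        _ = ENNReal.ofReal (l ^ (-(2*a))) * N ^ (2*a) := by
            rw [ENNReal.mul_rpow_of_nonneg _ _ ha0.le, ← ENNReal.rpow_mul,
              ← ENNReal.rpow_mul, ENNReal.inv_rpow, ← ENNReal.rpow_neg,
              ← ENNReal.ofReal_rpow_of_pos hl0]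
    calc ∫⁻ l in Ioi T, (distf volume w (ENNReal.ofReal l)) ^ a
        ≤ ∫⁻ l in Ioi T, ENNReal.ofReal (l ^ (-(2*a))) * N ^ (2*a) :=
          setLIntegral_mono' measurableSet_Ioi hpt
      _ = (∫⁻ l in Ioi T, ENNReal.ofReal (l ^ (-(2*a)))) * N ^ (2*a) := by
          exact lintegral_mul_const'' _
            ((ENNReal.measurable_ofReal.comp (measurable_id.pow_const _)).aemeasurable)
      _ ≤ ENNReal.ofReal (2*a-1)⁻¹ * (m ^ (a - 1/2) * N) := by
          have hint : IntegrableOn (fun l : ℝ => l ^ (-(2*a))) (Ioi T) :=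
            integrableOn_Ioi_rpow_of_lt (by linarith) hT0
          have hnn : 0 ≤ᵐ[volume.restrict (Ioi T)] fun l : ℝ => l ^ (-(2*a)) := by
            refine (ae_restrict_iff' measurableSet_Ioi).2 (ae_of_all _ fun l hl => ?_)
            exact Real.rpow_nonneg (lt_trans hT0 hl).le _
          rw [← ofReal_integral_eq_lintegral_ofReal hint hnn,
            integral_Ioi_rpow_of_lt (by linarith) hT0,
            show (-(2*a) + 1 : ℝ) = -(2*a-1) from by ring, neg_div_neg_eq,
            div_eq_mul_inv, ENNReal.ofReal_mul (Real.rpow_nonneg hT0.le _),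
            ← ENNReal.ofReal_rpow_of_pos hT0, hofT]
          rw [ENNReal.mul_rpow_of_ne_top hNtop
            (by simp [ENNReal.rpow_neg, ENNReal.inv_ne_top,
                ENNReal.rpow_eq_zero_iff, hm0, hmtop] : m ^ (-(1/2):ℝ) ≠ ⊤),
            ← ENNReal.rpow_mul]
          -- now : (N ^ -(2a-1) * m ^ ((-(1/2)) * -(2a-1)) * ofReal (2a-1)⁻¹) * N ^ (2a)
          rw [show (-(1/2) * -(2*a-1) : ℝ) = a - 1/2 from by ring]
          refine le_of_eq ?_
          calc (N ^ (-(2*a-1)) * m ^ (a - 1/2) * ENNReal.ofReal (2*a-1)⁻¹) * N ^ (2*a)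
              = ENNReal.ofReal (2*a-1)⁻¹ * (m ^ (a - 1/2) * (N ^ (-(2*a-1)) * N ^ (2*a))) := by
                ring
            _ = ENNReal.ofReal (2*a-1)⁻¹ * (m ^ (a - 1/2) * N) := by
                rw [← ENNReal.rpow_add _ _ hN0 hNtop,
                  show (-(2*a-1) + 2*a : ℝ) = 1 from by ring, ENNReal.rpow_one]
  calc (∫⁻ l in Ioc (0:ℝ) T, (distf volume w (ENNReal.ofReal l)) ^ a)
        + ∫⁻ l in Ioi T, (distf volume w (ENNReal.ofReal l)) ^ a
      ≤ m ^ (a - 1/2) * N + ENNReal.ofReal (2*a-1)⁻¹ * (m ^ (a - 1/2) * N) :=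
        add_le_add part1 part2
    _ = (1 + ENNReal.ofReal (2*a-1)⁻¹) * (m ^ (a - 1/2) * N) := by ring

lemma tsum_rpow_le {a : ℝ} (ha0 : 0 < a) (ha1 : a ≤ 1) (g : ℕ → ℝ≥0∞) :
    (∑' k, g k) ^ a ≤ ∑' k, (g k) ^ a := by
  have hfin : ∀ n : ℕ, (∑ k ∈ Finset.range n, g k) ^ a ≤ ∑ k ∈ Finset.range n, (g k) ^ a := by
    intro n
    induction n with
    | zero => simp [ENNReal.zero_rpow_of_pos ha0]
    | succ n ih =>
      rw [Finset.sum_range_succ, Finset.sum_range_succ]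
      exact le_trans (ENNReal.rpow_add_le_add_rpow _ _ ha0.le ha1) (add_le_add ih le_rfl)
  have htend : Tendsto (fun n => (∑ k ∈ Finset.range n, g k) ^ a) atTop
      (nhds ((∑' k, g k) ^ a)) :=
    ((ENNReal.continuous_rpow_const (y := a)).tendsto _).comp (ENNReal.tendsto_nat_tsum g)
  exact le_of_tendsto' htend fun n => le_trans (hfin n) (ENNReal.sum_le_tsum _)

lemma measurableSet_annulus (k : ℕ) : MeasurableSet (annulus k) := by
  have h : annulus k = (fun x : E3 => ‖x‖) ⁻¹' (Icc ((2:ℝ)^(k:ℝ)) ((2:ℝ)^((k:ℝ)+1))) := rfl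
  rw [h]
  exact measurable_norm measurableSet_Icc

lemma annulus_vol (k : ℕ) :
    volume (annulus k) ≤ ENNReal.ofReal ((2:ℝ) ^ ((((k:ℝ)+1) * 3))) *
      volume (Metric.ball (0:E3) 1) := by
  have hsub : annulus k ⊆ Metric.closedBall (0:E3) ((2:ℝ) ^ ((k:ℝ)+1)) := fun x hx =>
    mem_closedBall_zero_iff.2 hx.2
  refine le_trans (measure_mono hsub) (le_of_eq ?_)
  rw [Measure.addHaar_closedBall _ _ (Real.rpow_nonneg (by norm_num) _)]
  congr 2
  have hfr : Module.finrank ℝ E3 = 3 := by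
    simp [finrank_euclideanSpace]
  rw [hfr, ← Real.rpow_natCast ((2:ℝ) ^ ((k:ℝ)+1)) 3, ← Real.rpow_mul (by norm_num : (0:ℝ) ≤ 2)]
  norm_num

end BLor

open BLor

/-- Embedding `B^{3θ/2} ↪ L^{p,1}` with `p = 2/(1+θ)`, `0 < θ < 1`:
`‖v‖_{L^{p,1}} ≲ ‖v‖_{B^{3θ/2}}`. -/
theorem Bspace_embeds_lorentz (θ : ℝ) (hθ0 : 0 < θ) (hθ1 : θ < 1) :
    ∃ C : ℝ, 0 < C ∧ ∀ v : E3 → ℂ, Measurable v →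
      lorentzNorm volume (2 / (1 + θ)) 1 v ≤ ENNReal.ofReal C * Bnorm (3 * θ / 2) v := by
  set a : ℝ := (1+θ)/2 with haa
  have ha : 1/2 < a := by rw [haa]; linarith
  have ha1 : a < 1 := by rw [haa]; linarith
  have ha0 : (0:ℝ) < a := by linarith
  have hd : a - 1/2 = θ/2 := by rw [haa]; ring
  have hd0 : (0:ℝ) ≤ a - 1/2 := by linarith
  set V : ℝ≥0∞ := volume (Metric.ball (0:E3) 1) with hVdef
  have hVtop : V ≠ ⊤ := measure_ball_lt_top.ne
  set Ca : ℝ≥0∞ := 1 + ENNReal.ofReal (2*a-1)⁻¹ with hCadef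
  have hCatop : Ca ≠ ⊤ := by
    rw [hCadef]
    exact ENNReal.add_ne_top.2 ⟨ENNReal.one_ne_top, ENNReal.ofReal_ne_top⟩
  set W : ℝ≥0∞ := ENNReal.ofReal ((2:ℝ) ^ (3*θ/2)) with hWdef
  have hW1 : (1:ℝ≥0∞) ≤ W := by
    rw [hWdef, ← ENNReal.ofReal_one]
    refine ENNReal.ofReal_le_ofReal ?_
    calc (1:ℝ) = (2:ℝ) ^ (0:ℝ) := by rw [Real.rpow_zero]
      _ ≤ (2:ℝ) ^ (3*θ/2) := Real.rpow_le_rpow_of_exponent_le one_le_two (by linarith)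
  set K1 : ℝ≥0∞ := Ca * V ^ (a - 1/2) * W with hK1def
  set K : ℝ≥0∞ := ENNReal.ofReal a⁻¹ * K1 with hKdef
  have hKtop : K ≠ ⊤ := by
    rw [hKdef, hK1def]
    exact ENNReal.mul_ne_top ENNReal.ofReal_ne_top (ENNReal.mul_ne_top
      (ENNReal.mul_ne_top hCatop (ENNReal.rpow_ne_top_of_nonneg hd0 hVtop))
      ENNReal.ofReal_ne_top)
  refine ⟨K.toReal + 1, by positivity, fun v hv => ?_⟩
  have hKC : K ≤ ENNReal.ofReal (K.toReal + 1) := by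
    conv_lhs => rw [← ENNReal.ofReal_toReal hKtop]
    exact ENNReal.ofReal_le_ofReal (by linarith)
  refine le_trans ?_ (mul_le_mul_left hKC _)
  -- notation for pieces
  set v0 : E3 → ℂ := (Metric.ball (0:E3) 1).indicator v with hv0def
  set vk : ℕ → E3 → ℂ := fun k => (annulus k).indicator v with hvkdef
  have hv0m : Measurable v0 := hv.indicator measurableSet_ball
  have hvkm : ∀ k, Measurable (vk k) := fun k => hv.indicator (measurableSet_annulus k)
  -- step 1 : unfold the Lorentz norm
  have hlor : lorentzNorm volume (2/(1+θ)) 1 v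
      = ∫⁻ t in Ioi (0:ℝ), ENNReal.ofReal (t ^ (a-1)) * rearr volume v t := by
    rw [lorentzNorm, if_neg (by simp : ¬ (1:ℝ≥0∞) = ∞)]
    rw [ENNReal.toReal_one, one_div_one, ENNReal.rpow_one]
    refine setLIntegral_congr_fun measurableSet_Ioi (fun t ht => ?_)
    have ht0 : (0:ℝ) < t := ht
    rw [ENNReal.rpow_one, one_div_div]
    rw [mul_right_comm]
    congr 1
    rw [← ENNReal.ofReal_inv_of_pos ht0, ← ENNReal.ofReal_mul (Real.rpow_nonneg ht0.le _)]
    congr 1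
    rw [← Real.rpow_neg_one t, ← Real.rpow_add ht0, show (1+θ)/2 + (-1:ℝ) = a - 1 from by rw [haa]; ring]
  -- step 2 : pass to the distribution function
  have hswap : lorentzNorm volume (2/(1+θ)) 1 v
      ≤ ENNReal.ofReal a⁻¹ * ∫⁻ l in Ioi (0:ℝ), (distf volume v (ENNReal.ofReal l)) ^ a := by
    rw [hlor]; exact key_swap ha0 ha1 volume v
  -- step 3 : split into pieces
  have hmeas0 : Measurable fun l : ℝ => (distf volume v0 (ENNReal.ofReal l)) ^ a := by
    refine Antitone.measurable fun l l' h => ?_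
    exact ENNReal.rpow_le_rpow (distf_antitone (ENNReal.ofReal_le_ofReal h)) ha0.le
  have hmeask : ∀ k : ℕ, Measurable fun l : ℝ => (distf volume (vk k) (ENNReal.ofReal l)) ^ a := by
    intro k
    refine Antitone.measurable fun l l' h => ?_
    exact ENNReal.rpow_le_rpow (distf_antitone (ENNReal.ofReal_le_ofReal h)) ha0.le
  have hsplit : ∫⁻ l in Ioi (0:ℝ), (distf volume v (ENNReal.ofReal l)) ^ a
      ≤ (∫⁻ l in Ioi (0:ℝ), (distf volume v0 (ENNReal.ofReal l)) ^ a)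
        + ∑' k : ℕ, ∫⁻ l in Ioi (0:ℝ), (distf volume (vk k) (ENNReal.ofReal l)) ^ a := by
    have hpt : ∀ l : ℝ, (distf volume v (ENNReal.ofReal l)) ^ a
        ≤ (distf volume v0 (ENNReal.ofReal l)) ^ a
          + ∑' k : ℕ, (distf volume (vk k) (ENNReal.ofReal l)) ^ a := by
      intro l
      refine le_trans (ENNReal.rpow_le_rpow (distf_le_pieces v _) ha0.le) ?_
      refine le_trans (ENNReal.rpow_add_le_add_rpow _ _ ha0.le ha1.le) ?_
      exact add_le_add le_rfl (tsum_rpow_le ha0 ha1.le _)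
    refine le_trans (lintegral_mono hpt) ?_
    rw [lintegral_add_left hmeas0, lintegral_tsum fun k => (hmeask k).aemeasurable]
  -- step 4 : bound each piece
  have hI0 : ∫⁻ l in Ioi (0:ℝ), (distf volume v0 (ENNReal.ofReal l)) ^ a
      ≤ K1 * eLpNorm v0 2 volume := by
    have h := piece_bound ha ha1 hv0m
      (fun x hx => Set.indicator_of_notMem hx v)
    refine le_trans h ?_
    rw [← hVdef, hK1def]
    calc Ca * (V ^ (a - 1/2) * eLpNorm v0 2 volume)
        = Ca * V ^ (a - 1/2) * 1 * eLpNorm v0 2 volume := by ring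
      _ ≤ Ca * V ^ (a - 1/2) * W * eLpNorm v0 2 volume := by
          exact mul_le_mul_left (mul_le_mul_right hW1 _) _
  have hIk : ∀ k : ℕ, ∫⁻ l in Ioi (0:ℝ), (distf volume (vk k) (ENNReal.ofReal l)) ^ a
      ≤ K1 * (ENNReal.ofReal ((2:ℝ) ^ (3 * θ / 2 * (k:ℝ))) * eLpNorm (vk k) 2 volume) := by
    intro k
    have h := piece_bound ha ha1 (hvkm k)
      (fun x hx => Set.indicator_of_notMem hx v)
    refine le_trans h ?_
    have hvol : (volume (annulus k)) ^ (a - 1/2)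
        ≤ ENNReal.ofReal ((2:ℝ) ^ (3 * θ / 2 * (k:ℝ))) * W * V ^ (a - 1/2) := by
      refine le_trans (ENNReal.rpow_le_rpow (annulus_vol k) hd0) (le_of_eq ?_)
      rw [ENNReal.mul_rpow_of_nonneg _ _ hd0, ENNReal.ofReal_rpow_of_pos
        (Real.rpow_pos_of_pos two_pos _), ← Real.rpow_mul (by norm_num : (0:ℝ) ≤ 2)]
      rw [show (((k:ℝ)+1) * 3) * (a - 1/2) = 3 * θ / 2 * (k:ℝ) + 3*θ/2 from by rw [hd]; ring]
      rw [Real.rpow_add two_pos, ENNReal.ofReal_mul (Real.rpow_nonneg (by norm_num) _), hWdef]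
    calc Ca * ((volume (annulus k)) ^ (a - 1/2) * eLpNorm (vk k) 2 volume)
        ≤ Ca * ((ENNReal.ofReal ((2:ℝ) ^ (3 * θ / 2 * (k:ℝ))) * W * V ^ (a - 1/2))
            * eLpNorm (vk k) 2 volume) :=
          mul_le_mul_right (mul_le_mul_left hvol _) _
      _ = K1 * (ENNReal.ofReal ((2:ℝ) ^ (3 * θ / 2 * (k:ℝ))) * eLpNorm (vk k) 2 volume) := by
          rw [hK1def]; ring
  -- step 5 : sum up
  have hBnorm : (∫⁻ l in Ioi (0:ℝ), (distf volume v0 (ENNReal.ofReal l)) ^ a)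
      + ∑' k : ℕ, ∫⁻ l in Ioi (0:ℝ), (distf volume (vk k) (ENNReal.ofReal l)) ^ a
      ≤ K1 * Bnorm (3 * θ / 2) v := by
    refine le_trans (add_le_add hI0 (ENNReal.tsum_le_tsum hIk)) ?_
    rw [ENNReal.tsum_mul_left, ← mul_add]
    rfl
  calc lorentzNorm volume (2/(1+θ)) 1 v
      ≤ ENNReal.ofReal a⁻¹ * ∫⁻ l in Ioi (0:ℝ), (distf volume v (ENNReal.ofReal l)) ^ a :=
        hswap
    _ ≤ ENNReal.ofReal a⁻¹ * (K1 * Bnorm (3 * θ / 2) v) :=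
        mul_le_mul_right (le_trans hsplit hBnorm) _
    _ = K * Bnorm (3 * θ / 2) v := by rw [hKdef]; ring

end
end

section
/- Let V ∈ L^{3/2,1}(ℝ³). Then for every f ∈ L^∞(ℝ³) and η ∈ ℝ³, the function x ↦ ∫_{ℝ³} e^{i|η||x−y|}/(4π|x−y|) V(y) f(y) dy is continuous on ℝ³ and tends to 0 as |x| → ∞. -/
open MeasureTheory Filter Complex
open scoped ENNReal NNReal Topology

noncomputable section

variable {α : Type*} [MeasurableSpace α]

/-- Kernel of the free resolvent `R₀(|η|² + i0)` on `ℝ³`: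
`e^{i|η||x−y|}/(4π|x−y|)`. -/
def resKer (η : E3) (x y : E3) : ℂ :=
  Complex.exp (Complex.I * (‖η‖ : ℂ) * (‖x - y‖ : ℂ)) / ((4 * Real.pi * ‖x - y‖ : ℝ) : ℂ)

open Set Metric

lemma ofReal_norm_eq_coe_nnnorm {E : Type*} [SeminormedAddGroup E] (a : E) :
    ENNReal.ofReal ‖a‖ = (‖a‖₊ : ℝ≥0∞) := ENNReal.ofReal_eq_coe_nnreal _

def c0 : ℝ := (volume (Metric.ball (0:E3) 1)).toReal

lemma distrib_antitone (μ : Measure α) (f : α → ℂ) :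
    Antitone (fun s => μ {x | s < (‖f x‖₊ : ℝ≥0∞)}) := by
  intro s s' h
  exact measure_mono (fun x hx => lt_of_le_of_lt h hx)

lemma rearr_antitone (μ : Measure α) (f : α → ℂ) : Antitone (rearr μ f) := by
  intro t t' h
  exact sInf_le_sInf (fun s hs => le_trans hs (ENNReal.ofReal_le_ofReal h))

lemma rearr_le {μ : Measure α} {f : α → ℂ} {t : ℝ} {s : ℝ≥0∞}
    (h : μ {x | s < (‖f x‖₊ : ℝ≥0∞)} ≤ ENNReal.ofReal t) : rearr μ f t ≤ s := sInf_le h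

lemma le_rearr {μ : Measure α} {f : α → ℂ} {t : ℝ} {s : ℝ≥0∞}
    (h : ENNReal.ofReal t < μ {x | s < (‖f x‖₊ : ℝ≥0∞)}) : s ≤ rearr μ f t := by
  refine le_sInf fun σ hσ => ?_
  by_contra hc
  push_neg at hc
  exact absurd (lt_of_le_of_lt hσ (lt_of_lt_of_le h (distrib_antitone μ f hc.le)))
    (lt_irrefl _)

lemma rearr_mono_fun {μ : Measure α} {f g : α → ℂ} (h : ∀ x, ‖g x‖₊ ≤ ‖f x‖₊) (t : ℝ) :
    rearr μ g t ≤ rearr μ f t := by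
  refine sInf_le_sInf fun s hs => ?_
  refine le_trans (measure_mono fun x hx => ?_) hs
  have hx' : s < (‖g x‖₊ : ℝ≥0∞) := hx
  exact lt_of_lt_of_le hx' (by exact_mod_cast h x)

lemma rearr_measurable (μ : Measure α) (f : α → ℂ) : Measurable (rearr μ f) :=
  (rearr_antitone μ f).measurable

lemma min_eq_vol {m : ℝ} (hm : 0 < m) (c : ℝ≥0∞) :
    min (ENNReal.ofReal m) c = volume {t : ℝ | t ∈ Set.Ioo 0 m ∧ ENNReal.ofReal t < c} := by
  rcases eq_or_ne c ⊤ with rfl | hc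
  · have : {t : ℝ | t ∈ Set.Ioo 0 m ∧ ENNReal.ofReal t < ⊤} = Set.Ioo 0 m := by
      ext t; simp [ENNReal.ofReal_lt_top]
    rw [this, Real.volume_Ioo, min_eq_left le_top]
    simp
  · have hset : {t : ℝ | t ∈ Set.Ioo 0 m ∧ ENNReal.ofReal t < c} = Set.Ioo 0 (min m c.toReal) := by
      ext t
      simp only [Set.mem_setOf_eq, Set.mem_Ioo, lt_min_iff]
      constructor
      · rintro ⟨⟨h1, h2⟩, h3⟩
        exact ⟨h1, h2, (ENNReal.ofReal_lt_iff_lt_toReal h1.le hc).1 h3⟩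
      · rintro ⟨h1, h2, h3⟩
        exact ⟨⟨h1, h2⟩, (ENNReal.ofReal_lt_iff_lt_toReal h1.le hc).2 h3⟩
    rw [hset, Real.volume_Ioo, sub_zero]
    rcases le_total m c.toReal with h | h
    · rw [min_eq_left h, min_eq_left]
      rw [← ENNReal.ofReal_toReal hc]
      exact ENNReal.ofReal_le_ofReal h
    · rw [min_eq_right h, min_eq_right, ENNReal.ofReal_toReal hc]
      rw [← ENNReal.ofReal_toReal hc]
      exact ENNReal.ofReal_le_ofReal h

lemma inv_eq_vol {r : ℝ} (hr : 0 ≤ r) :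
    (ENNReal.ofReal r)⁻¹ = volume {l : ℝ | 0 < l ∧ l * r < 1} := by
  rcases eq_or_lt_of_le hr with rfl | hr
  · have h : {l : ℝ | 0 < l ∧ l * 0 < 1} = Set.Ioi 0 := by ext l; simp
    rw [h, Real.volume_Ioi]
    simp
  · have : {l : ℝ | 0 < l ∧ l * r < 1} = Set.Ioo 0 r⁻¹ := by
      ext l
      simp only [Set.mem_setOf_eq, Set.mem_Ioo]
      have : ∀ l : ℝ, l * r < 1 ↔ l < r⁻¹ * 1 := fun l => ((lt_inv_mul_iff₀' hr).symm)
      constructor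
      · rintro ⟨h1, h2⟩; exact ⟨h1, by simpa using (this l).1 h2⟩
      · rintro ⟨h1, h2⟩; exact ⟨h1, (this l).2 (by simpa using h2)⟩
    rw [this, Real.volume_Ioo, sub_zero, ENNReal.ofReal_inv_of_pos hr]

lemma vol_le_of_subset_le {c : ℝ≥0∞} {S : Set ℝ} (hS : S ⊆ {s : ℝ | 0 < s ∧ ENNReal.ofReal s ≤ c}) :
    volume S ≤ c := by
  rcases eq_or_ne c ⊤ with rfl | hc
  · exact le_top
  · have hsub : S ⊆ Set.Ioc 0 c.toReal := fun s hs =>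
      Set.mem_Ioc.2 ⟨(hS hs).1, (ENNReal.ofReal_le_iff_le_toReal hc).1 (hS hs).2⟩
    calc volume S ≤ volume (Set.Ioc 0 c.toReal) := measure_mono hsub
      _ = ENNReal.ofReal c.toReal := by rw [Real.volume_Ioc, sub_zero]
      _ ≤ c := ENNReal.ofReal_toReal_le

lemma hardy_littlewood (μ : Measure α) [SFinite μ] {V : α → ℂ} (hV : Measurable V)
    {A : Set α} (hA : MeasurableSet A) {m : ℝ} (hm : 0 < m) (hAm : μ A ≤ ENNReal.ofReal m) :
    ∫⁻ y in A, (‖V y‖₊ : ℝ≥0∞) ∂μ ≤ ∫⁻ t in Set.Ioo 0 m, rearr μ V t := by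
  set D : ℝ≥0∞ → ℝ≥0∞ := fun c => μ {y | c < (‖V y‖₊ : ℝ≥0∞)} with hD
  have hDanti : Antitone D := distrib_antitone μ V
  have hDmeas : Measurable (fun s : ℝ => D (ENNReal.ofReal s)) :=
    (hDanti.comp_monotone (fun a b h => ENNReal.ofReal_le_ofReal h)).measurable
  -- layer cake
  have h1 : ∫⁻ y in A, (‖V y‖₊ : ℝ≥0∞) ∂μ
      = ∫⁻ s in Ioi (0:ℝ), (μ.restrict A) {y | s < ‖V y‖} := by
    rw [← lintegral_eq_lintegral_meas_lt (μ.restrict A)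
      (Eventually.of_forall fun y => norm_nonneg _) (hV.norm.aemeasurable)]
    congr 1; ext y; rw [← ofReal_norm_eq_coe_nnnorm]
  rw [h1]
  -- pointwise bound by min
  have h2 : ∫⁻ s in Ioi (0:ℝ), (μ.restrict A) {y | s < ‖V y‖}
      ≤ ∫⁻ s in Ioi (0:ℝ), min (ENNReal.ofReal m) (D (ENNReal.ofReal s)) := by
    refine setLIntegral_mono (measurable_const.min hDmeas) fun s hs => ?_
    have hset : {y | s < ‖V y‖} = {y | ENNReal.ofReal s < (‖V y‖₊ : ℝ≥0∞)} := by
      ext y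
      rw [Set.mem_setOf_eq, Set.mem_setOf_eq, ← ofReal_norm_eq_coe_nnnorm,
        ENNReal.ofReal_lt_ofReal_iff_of_nonneg (le_of_lt hs)]
    refine le_min ?_ ?_
    · calc (μ.restrict A) {y | s < ‖V y‖} ≤ (μ.restrict A) Set.univ :=
            measure_mono (Set.subset_univ _)
        _ = μ A := Measure.restrict_apply_univ _
        _ ≤ ENNReal.ofReal m := hAm
    · rw [hset]
      exact Measure.restrict_apply_le A _
  refine le_trans h2 ?_
  -- rewrite min as inner integral and swap
  set f : ℝ → ℝ → ℝ≥0∞ := fun s t =>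
    Set.indicator {p : ℝ | ENNReal.ofReal p < D (ENNReal.ofReal s)} (fun _ => 1) t with hf
  have hP : MeasurableSet {p : ℝ × ℝ | ENNReal.ofReal p.2 < D (ENNReal.ofReal p.1)} :=
    measurableSet_lt (ENNReal.measurable_ofReal.comp measurable_snd)
      (hDmeas.comp measurable_fst)
  have hfm : AEMeasurable (Function.uncurry f)
      ((volume.restrict (Ioi (0:ℝ))).prod (volume.restrict (Ioo (0:ℝ) m))) := by
    have : Function.uncurry f =
        Set.indicator {p : ℝ × ℝ | ENNReal.ofReal p.2 < D (ENNReal.ofReal p.1)}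
          (fun _ => (1:ℝ≥0∞)) := by
      ext p
      simp only [Function.uncurry, hf, Set.indicator_apply, Set.mem_setOf_eq]
    rw [this]
    exact ((measurable_const (a := (1:ℝ≥0∞))).indicator hP).aemeasurable
  have h3 : ∫⁻ s in Ioi (0:ℝ), min (ENNReal.ofReal m) (D (ENNReal.ofReal s))
      = ∫⁻ s in Ioi (0:ℝ), ∫⁻ t in Ioo 0 m, f s t := by
    refine lintegral_congr fun s => ?_
    rw [min_eq_vol hm]
    have hSm : MeasurableSet {p : ℝ | ENNReal.ofReal p < D (ENNReal.ofReal s)} :=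
      measurableSet_lt ENNReal.measurable_ofReal measurable_const
    rw [hf]
    rw [lintegral_indicator hSm, setLIntegral_one, Measure.restrict_apply hSm]
    congr 1
    ext t
    simp only [Set.mem_inter_iff, Set.mem_setOf_eq]
    tauto
  rw [h3, lintegral_lintegral_swap hfm]
  refine setLIntegral_mono (rearr_measurable μ V) fun t ht => ?_
  have hrw : ∀ s : ℝ, f s t =
      Set.indicator {s' : ℝ | ENNReal.ofReal t < D (ENNReal.ofReal s')} (fun _ => 1) s := by
    intro s
    by_cases h : ENNReal.ofReal t < D (ENNReal.ofReal s) <;>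
      simp [hf, Set.indicator_apply, h]
  calc ∫⁻ s in Ioi (0:ℝ), f s t
      = ∫⁻ s in Ioi (0:ℝ),
        Set.indicator {s' : ℝ | ENNReal.ofReal t < D (ENNReal.ofReal s')} (fun _ => 1) s := by
        exact lintegral_congr hrw
    _ = volume ({s' : ℝ | ENNReal.ofReal t < D (ENNReal.ofReal s')} ∩ Ioi 0) := by
        rw [lintegral_indicator (measurableSet_lt measurable_const hDmeas), setLIntegral_one,
          Measure.restrict_apply (measurableSet_lt measurable_const hDmeas)]
    _ ≤ rearr μ V t := by
        refine vol_le_of_subset_le fun s hs => ?_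
        exact ⟨hs.2, le_rearr hs.1⟩

lemma c0_pos : 0 < c0 :=
  ENNReal.toReal_pos (measure_ball_pos volume 0 one_pos).ne' measure_ball_lt_top.ne

lemma mul_lt_one_iff_lt_inv {l r : ℝ} (hl : 0 < l) : l * r < 1 ↔ r < l⁻¹ := by
  have h := lt_inv_mul_iff₀' (a := r) (b := (1:ℝ)) hl
  rw [mul_one] at h
  rw [mul_comm]
  exact h.symm

lemma vol_ball (x : E3) {r : ℝ} (hr : 0 ≤ r) :
    volume (ball x r) = ENNReal.ofReal (c0 * r ^ 3) := by
  have h := Measure.addHaar_ball (μ := (volume : Measure E3)) x hr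
  rw [finrank_euclideanSpace] at h
  simp only [Fintype.card_fin] at h
  rw [h, ← ENNReal.ofReal_toReal (a := volume (ball (0:E3) 1)) measure_ball_lt_top.ne, ← c0,
    ← ENNReal.ofReal_mul (by positivity), mul_comm]

lemma master_ball (W : E3 → ℂ) (hW : Measurable W) (x : E3) {ρ : ℝ} (hρ : 0 < ρ) :
    ∫⁻ y in ball x ρ, (‖W y‖₊ : ℝ≥0∞) * (ENNReal.ofReal ‖x - y‖)⁻¹ ≤
    ∫⁻ t in Set.Ioo 0 (c0 * ρ ^ 3), rearr volume W t * ENNReal.ofReal ((c0 / t) ^ ((1:ℝ)/3)) := by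
  set g : E3 → ℝ → ℝ≥0∞ := fun y l =>
    Set.indicator {p : ℝ | p * ‖x - y‖ < 1} (fun _ => (‖W y‖₊ : ℝ≥0∞)) l with hg
  set M : ℝ → ℝ := fun l => c0 * (min ρ l⁻¹) ^ 3 with hM
  set h : ℝ → ℝ → ℝ≥0∞ := fun l t => Set.indicator (Iio (M l)) (rearr volume W) t with hh
  set F : ℝ → ℝ≥0∞ := fun t => rearr volume W t * ENNReal.ofReal ((c0 / t) ^ ((1:ℝ)/3))
    with hF
  have hMmeas : Measurable M := by
    exact (measurable_const.min measurable_inv).pow_const 3 |>.const_mul c0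
  have hFmeas : Measurable F :=
    (rearr_measurable volume W).mul
      (ENNReal.measurable_ofReal.comp ((measurable_const.div measurable_id).pow_const _))
  have huh : Measurable (Function.uncurry h) := by
    have : Function.uncurry h = Set.indicator {q : ℝ × ℝ | q.2 < M q.1}
        (fun q => rearr volume W q.2) := by
      ext p
      by_cases hc : p.2 < M p.1 <;>
        simp [Function.uncurry, hh, Set.indicator_apply, hc]
    rw [this]
    exact Measurable.indicator ((rearr_measurable volume W).comp measurable_snd)
      (measurableSet_lt measurable_snd (hMmeas.comp measurable_fst))
  have step1 : ∀ y : E3, (‖W y‖₊ : ℝ≥0∞) * (ENNReal.ofReal ‖x - y‖)⁻¹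
      = ∫⁻ l in Ioi (0:ℝ), g y l := by
    intro y
    have hS : MeasurableSet {p : ℝ | p * ‖x - y‖ < 1} :=
      measurableSet_lt (measurable_id.mul_const _) measurable_const
    rw [hg]
    rw [lintegral_indicator hS, setLIntegral_const, Measure.restrict_apply hS,
      inv_eq_vol (norm_nonneg _)]
    congr 2
    ext l
    simp only [Set.mem_inter_iff, Set.mem_setOf_eq, Set.mem_Ioi]
    tauto
  have hug : AEMeasurable (Function.uncurry g)
      ((volume.restrict (ball x ρ)).prod (volume.restrict (Ioi (0:ℝ)))) := by
    have : Function.uncurry g = Set.indicator {q : E3 × ℝ | q.2 * ‖x - q.1‖ < 1}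
        (fun q => (‖W q.1‖₊ : ℝ≥0∞)) := by
      ext p
      by_cases hc : p.2 * ‖x - p.1‖ < 1 <;>
        simp [Function.uncurry, hg, Set.indicator_apply, hc]
    rw [this]
    refine (Measurable.indicator ((measurable_coe_nnreal_ennreal.comp hW.nnnorm).comp
      measurable_fst) (measurableSet_lt (measurable_snd.mul
        ((measurable_const.sub measurable_fst).norm)) measurable_const)).aemeasurable
  calc ∫⁻ y in ball x ρ, (‖W y‖₊ : ℝ≥0∞) * (ENNReal.ofReal ‖x - y‖)⁻¹
      = ∫⁻ y in ball x ρ, ∫⁻ l in Ioi (0:ℝ), g y l := lintegral_congr step1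
    _ = ∫⁻ l in Ioi (0:ℝ), ∫⁻ y in ball x ρ, g y l := lintegral_lintegral_swap hug
    _ ≤ ∫⁻ l in Ioi (0:ℝ), ∫⁻ t in Ioi (0:ℝ), h l t := by
        refine setLIntegral_mono (Measurable.lintegral_prod_right huh) fun l hl => ?_
        have hl0 : (0:ℝ) < l := hl
        have hmin : 0 < min ρ l⁻¹ := lt_min hρ (by positivity)
        -- inner set rewrite
        have hSet : MeasurableSet {y : E3 | l * ‖x - y‖ < 1} :=
          measurableSet_lt ((measurable_const.sub measurable_id).norm.const_mul l)
            measurable_const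
        have e1 : ∫⁻ y in ball x ρ, g y l
            = ∫⁻ y in ball x (min ρ l⁻¹), (‖W y‖₊ : ℝ≥0∞) := by
          have : ∀ y : E3, g y l = Set.indicator {y' : E3 | l * ‖x - y'‖ < 1}
              (fun y' => (‖W y'‖₊ : ℝ≥0∞)) y := by
            intro y
            by_cases hc : l * ‖x - y‖ < 1 <;>
              simp [hg, Set.indicator_apply, hc]
          have hseteq : {y' : E3 | l * ‖x - y'‖ < 1} ∩ ball x ρ = ball x (min ρ l⁻¹) := by
            ext y
            have hxy : ‖x - y‖ = dist y x := by rw [dist_eq_norm, norm_sub_rev]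
            simp only [Set.mem_inter_iff, Set.mem_setOf_eq, mem_ball, lt_min_iff, hxy,
              mul_lt_one_iff_lt_inv hl0]
            tauto
          rw [lintegral_congr this, lintegral_indicator hSet,
            Measure.restrict_restrict hSet, hseteq]
        have e2 : ∫⁻ y in ball x (min ρ l⁻¹), (‖W y‖₊ : ℝ≥0∞)
            ≤ ∫⁻ t in Set.Ioo 0 (M l), rearr volume W t := by
          have hMl : (0:ℝ) < M l := by
            have : (0:ℝ) < (min ρ l⁻¹) ^ 3 := pow_pos hmin 3
            have := mul_pos c0_pos this
            exact this
          refine hardy_littlewood volume hW measurableSet_ball hMl ?_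
          rw [vol_ball x hmin.le]
        have hseteq2 : Iio (M l) ∩ Ioi (0:ℝ) = Set.Ioo 0 (M l) := by
          ext t; simp only [Set.mem_inter_iff, Set.mem_Iio, Set.mem_Ioi, Set.mem_Ioo]; tauto
        have e3 : ∫⁻ t in Ioi (0:ℝ), h l t = ∫⁻ t in Set.Ioo 0 (M l), rearr volume W t := by
          rw [hh]
          rw [lintegral_indicator measurableSet_Iio, Measure.restrict_restrict measurableSet_Iio,
            hseteq2]
        rw [e1, e3]
        exact e2
    _ = ∫⁻ t in Ioi (0:ℝ), ∫⁻ l in Ioi (0:ℝ), h l t := lintegral_lintegral_swap huh.aemeasurable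
    _ ≤ ∫⁻ t in Ioi (0:ℝ), Set.indicator (Iio (c0 * ρ ^ 3)) F t := by
        refine setLIntegral_mono (hFmeas.indicator measurableSet_Iio) fun t ht => ?_
        have ht0 : (0:ℝ) < t := ht
        have hinner : ∀ l : ℝ, h l t
            = Set.indicator {l' : ℝ | t < M l'} (fun _ => rearr volume W t) l := by
          intro l
          by_cases hc : t < M l <;> simp [hh, Set.indicator_apply, hc]
        have hTset : MeasurableSet {l' : ℝ | t < M l'} :=
          measurableSet_lt measurable_const hMmeas
        rw [lintegral_congr hinner, lintegral_indicator hTset, setLIntegral_const,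
          Measure.restrict_apply hTset]
        by_cases hcase : t < c0 * ρ ^ 3
        · rw [Set.indicator_of_mem (Set.mem_Iio.2 hcase)]
          refine mul_le_mul_right ?_ _
          have hsub : {l' : ℝ | t < M l'} ∩ Ioi 0 ⊆ Ioo 0 ((c0 / t) ^ ((1:ℝ)/3)) := by
            rintro l ⟨hl1, hl2⟩
            have hl0 : (0:ℝ) < l := hl2
            have hMleq : M l = c0 * (min ρ l⁻¹) ^ 3 := rfl
            have h1 : t < c0 * (l⁻¹) ^ 3 := by
              have hl1' : t < M l := hl1
              rw [hMleq] at hl1'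
              refine lt_of_lt_of_le hl1' ?_
              have hle : (min ρ l⁻¹) ^ 3 ≤ (l⁻¹) ^ 3 :=
                pow_le_pow_left₀ (le_of_lt (lt_min hρ (inv_pos.2 hl0))) (min_le_right _ _) 3
              nlinarith [c0_pos]
            have h2 : l ^ 3 < c0 / t := by
              rw [lt_div_iff₀ ht0]
              have hinv : (l⁻¹) ^ 3 = (l ^ 3)⁻¹ := by rw [inv_pow]
              rw [hinv] at h1
              have hl3 : (0:ℝ) < l ^ 3 := by positivity
              calc l ^ 3 * t = t * l ^ 3 := mul_comm _ _
                _ < (c0 * (l ^ 3)⁻¹) * l ^ 3 := by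
                    exact mul_lt_mul_of_pos_right h1 hl3
                _ = c0 := by field_simp
            refine ⟨hl0, ?_⟩
            calc l = (l ^ (3:ℕ) : ℝ) ^ ((1:ℝ)/3) := by
                  rw [← Real.rpow_natCast l 3, ← Real.rpow_mul hl0.le]
                  norm_num
              _ < (c0 / t) ^ ((1:ℝ)/3) := by
                  refine Real.rpow_lt_rpow (by positivity) h2 (by norm_num)
          calc volume ({l' : ℝ | t < M l'} ∩ Ioi 0)
              ≤ volume (Ioo 0 ((c0 / t) ^ ((1:ℝ)/3))) := measure_mono hsub
            _ = ENNReal.ofReal ((c0 / t) ^ ((1:ℝ)/3)) := by rw [Real.volume_Ioo, sub_zero]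
        · rw [Set.indicator_of_notMem (by simpa [Set.mem_Iio] using hcase)]
          have hempty : {l' : ℝ | t < M l'} ∩ Ioi 0 = ∅ := by
            ext l
            simp only [Set.mem_inter_iff, Set.mem_setOf_eq, Set.mem_Ioi, Set.mem_empty_iff_false,
              iff_false, not_and]
            intro hl1 hl2
            push_neg at hcase
            have hMleq : M l = c0 * (min ρ l⁻¹) ^ 3 := rfl
            have : M l ≤ c0 * ρ ^ 3 := by
              rw [hMleq]
              have hle : (min ρ l⁻¹) ^ 3 ≤ ρ ^ 3 :=
                pow_le_pow_left₀ (le_of_lt (lt_min hρ (inv_pos.2 hl2))) (min_le_left _ _) 3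
              nlinarith [c0_pos]
            linarith
          rw [hempty]
          simp
    _ = ∫⁻ t in Set.Ioo 0 (c0 * ρ ^ 3), F t := by
        have hseteq3 : Iio (c0 * ρ ^ 3) ∩ Ioi (0:ℝ) = Set.Ioo 0 (c0 * ρ ^ 3) := by
          ext t; simp only [Set.mem_inter_iff, Set.mem_Iio, Set.mem_Ioi, Set.mem_Ioo]; tauto
        rw [lintegral_indicator measurableSet_Iio, Measure.restrict_restrict measurableSet_Iio,
          hseteq3]

/-- whole-space master bound -/
lemma master (W : E3 → ℂ) (hW : Measurable W) (x : E3) :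
    ∫⁻ y, (‖W y‖₊ : ℝ≥0∞) * (ENNReal.ofReal ‖x - y‖)⁻¹ ≤
    ∫⁻ t in Set.Ioi (0:ℝ), rearr volume W t * ENNReal.ofReal ((c0 / t) ^ ((1:ℝ)/3)) := by
  set G : E3 → ℝ≥0∞ := fun y => (‖W y‖₊ : ℝ≥0∞) * (ENNReal.ofReal ‖x - y‖)⁻¹ with hG
  have hGmeas : Measurable G :=
    (measurable_coe_nnreal_ennreal.comp hW.nnnorm).mul
      ((ENNReal.measurable_ofReal.comp (measurable_const.sub measurable_id).norm).inv)
  have key : ∫⁻ y, G y = ⨆ n : ℕ, ∫⁻ y in ball x ((n:ℝ)+1), G y := by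
    have h1 : ∀ y, G y = ⨆ n : ℕ, (ball x ((n:ℝ)+1)).indicator G y := by
      intro y
      refine le_antisymm ?_ (iSup_le fun n => Set.indicator_le_self _ _ _)
      obtain ⟨n, hn⟩ := exists_nat_gt (dist y x)
      refine le_iSup_of_le n ?_
      rw [Set.indicator_of_mem (by simp only [mem_ball]; linarith)]
    calc ∫⁻ y, G y = ∫⁻ y, ⨆ n : ℕ, (ball x ((n:ℝ)+1)).indicator G y :=
          lintegral_congr h1
      _ = ⨆ n : ℕ, ∫⁻ y, (ball x ((n:ℝ)+1)).indicator G y := by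
          refine lintegral_iSup (fun n => hGmeas.indicator measurableSet_ball) ?_
          intro n m hnm y
          have hc : ((n:ℝ)+1) ≤ ((m:ℝ)+1) := by
            have : (n:ℝ) ≤ (m:ℝ) := Nat.cast_le.2 hnm
            linarith
          refine Set.indicator_le_indicator_of_subset (ball_subset_ball hc) (fun _ => zero_le) _
      _ = ⨆ n : ℕ, ∫⁻ y in ball x ((n:ℝ)+1), G y := by
          exact iSup_congr fun n => lintegral_indicator measurableSet_ball G
  rw [key]
  refine iSup_le fun n => ?_
  refine le_trans (master_ball W hW x (by positivity : (0:ℝ) < (n:ℝ)+1)) ?_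
  refine lintegral_mono_set fun t ht => ht.1

/-- shrink: a finite integral over `Ioi 0` has small initial pieces -/
lemma shrink (K : ℝ → ℝ≥0∞) (hfin : ∫⁻ t in Set.Ioi (0:ℝ), K t ≠ ⊤)
    {ε : ℝ≥0∞} (hε : 0 < ε) : ∃ m : ℝ, 0 < m ∧ ∫⁻ t in Set.Ioo 0 m, K t < ε := by
  set ν : Measure ℝ := (volume.restrict (Set.Ioi (0:ℝ))).withDensity K with hν
  have hνa : ∀ {A : Set ℝ}, MeasurableSet A → A ⊆ Set.Ioi (0:ℝ) →
      ν A = ∫⁻ t in A, K t := by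
    intro A hA hsub
    rw [hν, withDensity_apply _ hA, Measure.restrict_restrict hA,
      Set.inter_eq_self_of_subset_left hsub]
  have hs : ∀ n : ℕ, ν (Set.Ioo 0 (1/((n:ℝ)+1))) = ∫⁻ t in Set.Ioo 0 (1/((n:ℝ)+1)), K t :=
    fun n => hνa measurableSet_Ioo Set.Ioo_subset_Ioi_self
  have hanti : Antitone fun n : ℕ => Set.Ioo (0:ℝ) (1/((n:ℝ)+1)) := by
    intro n m hnm
    refine Set.Ioo_subset_Ioo le_rfl ?_
    have : ((n:ℝ)+1) ≤ ((m:ℝ)+1) := by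
      have : (n:ℝ) ≤ m := Nat.cast_le.2 hnm
      linarith
    exact one_div_le_one_div_of_le (by positivity) this
  have hiInter : ⋂ n : ℕ, Set.Ioo (0:ℝ) (1/((n:ℝ)+1)) = ∅ := by
    ext t
    simp only [Set.mem_iInter, Set.mem_Ioo, Set.mem_empty_iff_false, iff_false, not_forall]
    by_cases ht : 0 < t
    · obtain ⟨n, hn⟩ := exists_nat_gt (1/t)
      refine ⟨n, fun h => ?_⟩
      have hp : (0:ℝ) < (n:ℝ)+1 := by positivity
      have h2 : 1/((n:ℝ)+1) < t := by
        rw [div_lt_iff₀ hp]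
        rw [div_lt_iff₀ ht] at hn
        nlinarith
      linarith [h.2]
    · exact ⟨0, fun h => ht h.1⟩
  have hfin' : ∃ n : ℕ, ν (Set.Ioo 0 (1/((n:ℝ)+1))) ≠ ⊤ := by
    refine ⟨0, ?_⟩
    rw [hs 0]
    exact fun h => hfin (eq_top_iff.2 (h ▸ lintegral_mono_set Set.Ioo_subset_Ioi_self))
  have htend := tendsto_measure_iInter_atTop (μ := ν)
    (fun n => (measurableSet_Ioo).nullMeasurableSet) hanti hfin'
  rw [hiInter, measure_empty] at htend
  have := htend.eventually_lt_const hε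
  obtain ⟨n, hn⟩ := this.exists
  refine ⟨1/((n:ℝ)+1), by positivity, ?_⟩
  rw [← hs n]
  exact hn

/-- divergence of `∫ (c0/t)^(1/3)` on `Ioi 0` -/
lemma divg : ∫⁻ t in Set.Ioi (0:ℝ), ENNReal.ofReal ((c0/t) ^ ((1:ℝ)/3)) = ⊤ := by
  by_contra hx
  set x := ∫⁻ t in Set.Ioi (0:ℝ), ENNReal.ofReal ((c0/t) ^ ((1:ℝ)/3)) with hxdef
  have hbound : ∀ n : ℕ, 1 ≤ n → ENNReal.ofReal (c0 * n^2) ≤ x := by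
    intro n hn
    have hnR : (1:ℝ) ≤ (n:ℝ) := by exact_mod_cast hn
    have hnpos : (0:ℝ) < n := by linarith
    have hstep : ∀ t ∈ Set.Ioo (0:ℝ) (c0 * n^3),
        ENNReal.ofReal ((n:ℝ)⁻¹) ≤ ENNReal.ofReal ((c0/t) ^ ((1:ℝ)/3)) := by
      intro t ht
      refine ENNReal.ofReal_le_ofReal ?_
      have h1 : ((n:ℝ)^3)⁻¹ ≤ c0/t := by
        rw [le_div_iff₀ ht.1]
        calc ((n:ℝ)^3)⁻¹ * t ≤ ((n:ℝ)^3)⁻¹ * (c0 * (n:ℝ)^3) :=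
              mul_le_mul_of_nonneg_left ht.2.le (by positivity)
          _ = c0 := by field_simp
      have h3 : ((n:ℝ)^3 : ℝ) = (n:ℝ) ^ (3:ℝ) := by
        rw [← Real.rpow_natCast (n:ℝ) 3]; norm_num
      have hcalc : (((n:ℝ)^3)⁻¹) ^ ((1:ℝ)/3) = ((n:ℝ))⁻¹ := by
        rw [h3, ← Real.rpow_neg_one ((n:ℝ) ^ (3:ℝ)),
          ← Real.rpow_mul (by positivity : (0:ℝ) ≤ (n:ℝ) ^ (3:ℝ)),
          ← Real.rpow_mul (by positivity : (0:ℝ) ≤ (n:ℝ))]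
        norm_num [Real.rpow_neg_one]
      calc ((n:ℝ))⁻¹ = (((n:ℝ)^3)⁻¹) ^ ((1:ℝ)/3) := hcalc.symm
        _ ≤ (c0/t) ^ ((1:ℝ)/3) := Real.rpow_le_rpow (by positivity) h1 (by norm_num)
    calc ENNReal.ofReal (c0 * n^2)
        = ENNReal.ofReal ((n:ℝ)⁻¹) * ENNReal.ofReal (c0 * n^3) := by
          rw [← ENNReal.ofReal_mul (by positivity)]
          congr 1
          field_simp
      _ = ENNReal.ofReal ((n:ℝ)⁻¹) * volume (Set.Ioo 0 (c0 * n^3)) := by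
          rw [Real.volume_Ioo, sub_zero]
      _ = ∫⁻ t in Set.Ioo (0:ℝ) (c0 * n^3), ENNReal.ofReal ((n:ℝ)⁻¹) := by
          rw [setLIntegral_const]
      _ ≤ ∫⁻ t in Set.Ioo (0:ℝ) (c0 * n^3), ENNReal.ofReal ((c0/t) ^ ((1:ℝ)/3)) :=
          setLIntegral_mono (ENNReal.measurable_ofReal.comp
            ((measurable_const.div measurable_id).pow_const _)) hstep
      _ ≤ x := lintegral_mono_set Set.Ioo_subset_Ioi_self
  obtain ⟨N, hN⟩ := exists_nat_gt (max 1 (x.toReal / c0))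
  have hN1 : 1 ≤ N := by
    by_contra h
    push_neg at h
    interval_cases N
    simp at hN
    have := hN.1
    linarith
  have h1 := hbound N hN1
  have hNR : x.toReal / c0 < N := lt_of_le_of_lt (le_max_right _ _) hN
  have h2 : x.toReal < c0 * N^2 := by
    have hNR1 : (1:ℝ) ≤ N := by exact_mod_cast hN1
    have hlt := (div_lt_iff₀ c0_pos).1 hNR
    have key : (N:ℝ)*c0 ≤ c0*(N:ℝ)^2 := by
      nlinarith [mul_le_mul_of_nonneg_left hNR1 (mul_nonneg c0_pos.le
        (by positivity : (0:ℝ) ≤ (N:ℝ)))]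
    linarith
  have := (ENNReal.ofReal_le_iff_le_toReal hx).1 h1
  linarith

/-- distribution function finiteness -/
lemma distrib_fin {V : E3 → ℂ}
    (hfin : ∫⁻ t in Set.Ioi (0:ℝ), rearr volume V t * ENNReal.ofReal ((c0/t) ^ ((1:ℝ)/3)) ≠ ⊤)
    {s : ℝ≥0∞} (hs : 0 < s) : volume {y | s < (‖V y‖₊ : ℝ≥0∞)} < ⊤ := by
  by_contra h
  push_neg at h
  have htop : volume {y | s < (‖V y‖₊ : ℝ≥0∞)} = ⊤ := top_le_iff.1 h
  set s₁ : ℝ≥0∞ := min s 1 with hs₁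
  have hs₁pos : 0 < s₁ := lt_min hs zero_lt_one
  have hs₁top : s₁ ≠ ⊤ := (lt_of_le_of_lt (min_le_right _ _) (by norm_num)).ne
  have htop₁ : volume {y | s₁ < (‖V y‖₊ : ℝ≥0∞)} = ⊤ := by
    rw [eq_top_iff, ← htop]
    exact measure_mono fun y hy => show s₁ < _ from lt_of_le_of_lt (min_le_left _ _) hy
  have hall : ∀ t : ℝ, s₁ ≤ rearr volume V t := by
    intro t
    refine le_rearr ?_
    rw [htop₁]
    exact ENNReal.ofReal_lt_top
  refine hfin ?_
  rw [eq_top_iff]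
  calc ⊤ = s₁ * ⊤ := by rw [ENNReal.mul_top hs₁pos.ne']
    _ = s₁ * ∫⁻ t in Set.Ioi (0:ℝ), ENNReal.ofReal ((c0/t) ^ ((1:ℝ)/3)) := by rw [divg]
    _ = ∫⁻ t in Set.Ioi (0:ℝ), s₁ * ENNReal.ofReal ((c0/t) ^ ((1:ℝ)/3)) :=
        (lintegral_const_mul' _ _ hs₁top).symm
    _ ≤ ∫⁻ t in Set.Ioi (0:ℝ), rearr volume V t * ENNReal.ofReal ((c0/t) ^ ((1:ℝ)/3)) :=
        lintegral_mono fun t => mul_le_mul_left (hall t) _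

lemma lorentz_eq (W : E3 → ℂ) :
    lorentzNorm volume (3/2) 1 W
      = ∫⁻ t in Set.Ioi (0:ℝ), rearr volume W t * ENNReal.ofReal (t ^ (-(1/3) : ℝ)) := by
  rw [lorentzNorm, if_neg (by norm_num : (1:ℝ≥0∞) ≠ ⊤)]
  rw [ENNReal.toReal_one]
  norm_num
  refine setLIntegral_congr_fun measurableSet_Ioi (fun t ht => ?_)
  have ht0 : (0:ℝ) < t := ht
  have he : (1:ℝ)/(3/2) = 2/3 := by norm_num
  rw [← ENNReal.ofReal_inv_of_pos ht0, mul_comm (ENNReal.ofReal (t ^ (2/3:ℝ))) (rearr volume W t),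
    mul_assoc, ← ENNReal.ofReal_mul (Real.rpow_nonneg ht0.le _)]
  congr 2
  rw [← Real.rpow_neg_one t, ← Real.rpow_add ht0]
  norm_num

lemma ofReal_kernel_split {t : ℝ} (ht : 0 < t) :
    ENNReal.ofReal ((c0/t) ^ ((1:ℝ)/3))
      = ENNReal.ofReal (c0 ^ ((1:ℝ)/3)) * ENNReal.ofReal (t ^ (-(1/3) : ℝ)) := by
  rw [← ENNReal.ofReal_mul (Real.rpow_nonneg c0_pos.le _)]
  congr 1
  rw [Real.div_rpow c0_pos.le ht.le, div_eq_mul_inv, ← Real.rpow_neg ht.le]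

lemma Kfin {V : E3 → ℂ} (hV : lorentzNorm volume (3/2) 1 V < ⊤) :
    ∫⁻ t in Set.Ioi (0:ℝ), rearr volume V t * ENNReal.ofReal ((c0/t) ^ ((1:ℝ)/3)) ≠ ⊤ := by
  have heq : ∫⁻ t in Set.Ioi (0:ℝ), rearr volume V t * ENNReal.ofReal ((c0/t) ^ ((1:ℝ)/3))
      = ENNReal.ofReal (c0 ^ ((1:ℝ)/3)) * lorentzNorm volume (3/2) 1 V := by
    rw [lorentz_eq, ← lintegral_const_mul' _ _ ENNReal.ofReal_ne_top]
    refine setLIntegral_congr_fun measurableSet_Ioi (fun t ht => ?_)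
    rw [ofReal_kernel_split ht]
    ring
  rw [heq]
  exact ENNReal.mul_ne_top ENNReal.ofReal_ne_top hV.ne

lemma L1loc {V : E3 → ℂ} (hV : Measurable V)
    (hfin : ∫⁻ t in Set.Ioi (0:ℝ), rearr volume V t * ENNReal.ofReal ((c0/t) ^ ((1:ℝ)/3)) ≠ ⊤)
    {R : ℝ} (hR : 0 < R) : ∫⁻ y in ball (0:E3) R, (‖V y‖₊ : ℝ≥0∞) ≠ ⊤ := by
  set m : ℝ := c0 * R ^ 3 with hm
  have hm0 : 0 < m := by
    have := c0_pos
    positivity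
  have h1 : ∫⁻ y in ball (0:E3) R, (‖V y‖₊ : ℝ≥0∞) ≤ ∫⁻ t in Set.Ioo 0 m, rearr volume V t :=
    hardy_littlewood volume hV measurableSet_ball hm0 (le_of_eq (vol_ball _ hR.le))
  have h2 : ∫⁻ t in Set.Ioo 0 m, rearr volume V t
      ≤ (∫⁻ t in Set.Ioi (0:ℝ), rearr volume V t * ENNReal.ofReal ((c0/t) ^ ((1:ℝ)/3)))
        * ENNReal.ofReal ((m/c0) ^ ((1:ℝ)/3)) := by
    calc ∫⁻ t in Set.Ioo 0 m, rearr volume V t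
        ≤ ∫⁻ t in Set.Ioo 0 m,
            (rearr volume V t * ENNReal.ofReal ((c0/t) ^ ((1:ℝ)/3)))
              * ENNReal.ofReal ((m/c0) ^ ((1:ℝ)/3)) := by
          refine setLIntegral_mono (((rearr_measurable volume V).mul
            (ENNReal.measurable_ofReal.comp
              ((measurable_const.div measurable_id).pow_const _))).mul_const _) fun t ht => ?_
          have ht0 : 0 < t := ht.1
          have hkey : (1:ℝ≥0∞) ≤ ENNReal.ofReal ((c0/t) ^ ((1:ℝ)/3))
              * ENNReal.ofReal ((m/c0) ^ ((1:ℝ)/3)) := by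
            rw [← ENNReal.ofReal_mul (Real.rpow_nonneg (div_nonneg c0_pos.le ht0.le) _),
              ← Real.mul_rpow (div_nonneg c0_pos.le ht0.le) (div_nonneg hm0.le c0_pos.le)]
            have hmt : (1:ℝ) ≤ c0/t * (m/c0) := by
              have ht' : t ≠ 0 := ht0.ne'
              have hc0' : c0 ≠ 0 := c0_pos.ne'
              have h3 : c0/t * (m/c0) = m/t := by field_simp
              rw [h3, le_div_iff₀ ht0]
              linarith [ht.2]
            refine ENNReal.one_le_ofReal.2 ?_
            calc (1:ℝ) = 1 ^ ((1:ℝ)/3) := (Real.one_rpow _).symm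
              _ ≤ (c0/t * (m/c0)) ^ ((1:ℝ)/3) :=
                  Real.rpow_le_rpow zero_le_one hmt (by norm_num)
          calc rearr volume V t = rearr volume V t * 1 := (mul_one _).symm
            _ ≤ rearr volume V t * (ENNReal.ofReal ((c0/t) ^ ((1:ℝ)/3))
                * ENNReal.ofReal ((m/c0) ^ ((1:ℝ)/3))) := mul_le_mul_right hkey _
            _ = (rearr volume V t * ENNReal.ofReal ((c0/t) ^ ((1:ℝ)/3)))
                * ENNReal.ofReal ((m/c0) ^ ((1:ℝ)/3)) := by ring
      _ = (∫⁻ t in Set.Ioo 0 m, rearr volume V t * ENNReal.ofReal ((c0/t) ^ ((1:ℝ)/3)))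
            * ENNReal.ofReal ((m/c0) ^ ((1:ℝ)/3)) :=
          lintegral_mul_const' _ _ ENNReal.ofReal_ne_top
      _ ≤ (∫⁻ t in Set.Ioi (0:ℝ), rearr volume V t * ENNReal.ofReal ((c0/t) ^ ((1:ℝ)/3)))
            * ENNReal.ofReal ((m/c0) ^ ((1:ℝ)/3)) := by
          exact mul_le_mul_left (lintegral_mono_set Set.Ioo_subset_Ioi_self) _
  exact fun htop => (ENNReal.mul_ne_top hfin ENNReal.ofReal_ne_top)
    (eq_top_iff.2 (htop ▸ (h1.trans h2)))

lemma tail_small {V : E3 → ℂ} (hV : Measurable V)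
    (hfin : ∫⁻ t in Set.Ioi (0:ℝ), rearr volume V t * ENNReal.ofReal ((c0/t) ^ ((1:ℝ)/3)) ≠ ⊤)
    {ε : ℝ≥0∞} (hε : 0 < ε) :
    ∃ R : ℝ, 0 < R ∧
      ∫⁻ t in Set.Ioi (0:ℝ), rearr volume (fun y => if R ≤ ‖y‖ then V y else 0) t *
        ENNReal.ofReal ((c0/t) ^ ((1:ℝ)/3)) < ε := by
  set Wn : ℕ → E3 → ℂ := fun n y => if (n:ℝ) ≤ ‖y‖ then V y else 0 with hWn
  have hle : ∀ (n : ℕ) (t : ℝ), rearr volume (Wn n) t ≤ rearr volume V t := by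
    intro n t
    refine rearr_mono_fun (fun y => ?_) t
    by_cases h : (n:ℝ) ≤ ‖y‖ <;> simp [hWn, h]
  -- pointwise convergence of rearrangements
  have hpt : ∀ t : ℝ, 0 < t →
      Tendsto (fun n : ℕ => rearr volume (Wn n) t) atTop (𝓝 0) := by
    intro t ht
    rw [ENNReal.tendsto_nhds_zero]
    intro δ hδ
    rcases eq_or_ne δ ⊤ with rfl | hδtop
    · exact Eventually.of_forall fun n => le_top
    · set A : ℕ → Set E3 := fun n => {y | δ < (‖V y‖₊ : ℝ≥0∞)} ∩ {y | (n:ℝ) ≤ ‖y‖} with hA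
      have hAmeas : ∀ n, MeasurableSet (A n) :=
        fun n => (measurableSet_lt measurable_const
          (measurable_coe_nnreal_ennreal.comp hV.nnnorm)).inter
          (measurableSet_le measurable_const measurable_norm)
      have hAanti : Antitone A := by
        intro n m hnm
        refine Set.inter_subset_inter le_rfl fun y hy => ?_
        have : (n:ℝ) ≤ (m:ℝ) := Nat.cast_le.2 hnm
        exact le_trans this hy
      have hAfin : ∃ n, volume (A n) ≠ ⊤ := by
        refine ⟨0, ?_⟩
        refine ne_of_lt (lt_of_le_of_lt (measure_mono Set.inter_subset_left) ?_)
        exact distrib_fin hfin hδ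
      have hAiInter : ⋂ n, A n = ∅ := by
        ext y
        simp only [Set.mem_iInter, Set.mem_inter_iff, Set.mem_setOf_eq,
          Set.mem_empty_iff_false, iff_false, not_forall]
        obtain ⟨n, hn⟩ := exists_nat_gt ‖y‖
        exact ⟨n, fun h => absurd h.2 (not_le.2 hn)⟩
      have htendA := tendsto_measure_iInter_atTop (μ := volume)
        (fun n => (hAmeas n).nullMeasurableSet) hAanti hAfin
      rw [hAiInter, measure_empty] at htendA
      have hev := htendA.eventually_lt_const (ENNReal.ofReal_pos.2 ht)
      refine hev.mono fun n hn => ?_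
      refine rearr_le ?_
      have hseteq : {y | δ < (‖Wn n y‖₊ : ℝ≥0∞)} = A n := by
        ext y
        simp only [hA, Set.mem_setOf_eq, Set.mem_inter_iff]
        by_cases h : (n:ℝ) ≤ ‖y‖
        · simp [hWn, h]
        · simp only [hWn, h, if_false, nnnorm_zero, ENNReal.coe_zero]
          exact iff_of_false (not_lt.2 zero_le) (fun hc => hc.2)
      rw [hseteq]
      exact le_of_lt hn
  -- dominated convergence
  have htend : Tendsto (fun n : ℕ => ∫⁻ t in Set.Ioi (0:ℝ),
      rearr volume (Wn n) t * ENNReal.ofReal ((c0/t) ^ ((1:ℝ)/3))) atTop (𝓝 0) := by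
    have h0 : (0:ℝ≥0∞) = ∫⁻ t in Set.Ioi (0:ℝ), (0:ℝ≥0∞) := by rw [lintegral_zero]
    rw [h0]
    refine tendsto_lintegral_of_dominated_convergence
      (fun t => rearr volume V t * ENNReal.ofReal ((c0/t) ^ ((1:ℝ)/3)))
      (fun n => (rearr_measurable volume (Wn n)).mul
        (ENNReal.measurable_ofReal.comp ((measurable_const.div measurable_id).pow_const _)))
      (fun n => ae_of_all _ fun t => mul_le_mul_left (hle n t) _)
      hfin ?_
    refine (ae_restrict_iff' measurableSet_Ioi).2 (ae_of_all _ fun t ht => ?_)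
    have hnt : ENNReal.ofReal ((c0/t) ^ ((1:ℝ)/3)) ≠ ⊤ := ENNReal.ofReal_ne_top
    have := ENNReal.Tendsto.mul_const (hpt t ht) (Or.inr hnt)
    simpa using this
  obtain ⟨n, hn1, hn2⟩ := ((htend.eventually_lt_const hε).and (eventually_ge_atTop 1)).exists
  exact ⟨(n:ℝ), by exact_mod_cast hn2, hn1⟩

lemma ofReal_inv_le (r : ℝ) : ENNReal.ofReal r⁻¹ ≤ (ENNReal.ofReal r)⁻¹ := by
  rcases lt_trichotomy r 0 with h | h | h
  · rw [ENNReal.ofReal_of_nonpos (inv_nonpos.2 h.le)]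
    exact zero_le
  · subst h
    simp
  · rw [ENNReal.ofReal_inv_of_pos h]

lemma resKer_norm (η x y : E3) : ‖resKer η x y‖ = (4*Real.pi)⁻¹ * ‖x - y‖⁻¹ := by
  rw [resKer, norm_div]
  have h1 : ‖Complex.exp (Complex.I * (‖η‖ : ℂ) * (‖x - y‖ : ℂ))‖ = 1 := by
    rw [Complex.norm_exp]
    have : (Complex.I * (‖η‖ : ℂ) * (‖x - y‖ : ℂ)).re = 0 := by
      simp [Complex.mul_re, Complex.mul_im]
    rw [this, Real.exp_zero]
  rw [h1, Complex.norm_real, Real.norm_eq_abs, _root_.abs_of_nonneg (by positivity), one_div, mul_inv, mul_inv]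

lemma resKer_meas (η x : E3) : Measurable (fun y => resKer η x y) := by
  refine Measurable.div ?_ ?_
  · exact Complex.measurable_exp.comp
      ((measurable_const.mul (Complex.measurable_ofReal.comp
        (measurable_const.sub measurable_id).norm)))
  · exact Complex.measurable_ofReal.comp
      ((measurable_const.sub measurable_id).norm.const_mul _)

/-- For `V ∈ L^{3/2,1}(ℝ³)` and `f ∈ L^∞`, the function
`x ↦ ∫ e^{i|η||x−y|}/(4π|x−y|) V(y) f(y) dy` is continuous and vanishes at infinity;
i.e., `R₀(|η|²+i0)V` maps `L^∞` into `C₀`. -/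
theorem resolvent_V_maps_Linfty_to_C0
    (V : E3 → ℂ) (hVmeas : Measurable V) (hV : lorentzNorm volume (3/2) 1 V < ∞)
    (f : E3 → ℂ) (hfmeas : Measurable f) (hf : eLpNorm f ∞ volume < ∞) (η : E3) :
    Continuous (fun x => ∫ y, resKer η x y * V y * f y) ∧
      Tendsto (fun x => ∫ y, resKer η x y * V y * f y)
        (Bornology.cobounded E3) (𝓝 0) := by
  set g : E3 → E3 → ℂ := fun x y => resKer η x y * V y * f y with hgdef
  set Mtop : ℝ≥0∞ := eLpNorm f ∞ volume with hMtop
  set Mr : ℝ := Mtop.toReal with hMrdef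
  have hMr0 : 0 ≤ Mr := ENNReal.toReal_nonneg
  have hfae : ∀ᵐ y : E3 ∂volume, ‖f y‖ ≤ Mr := by
    have h1 : ∀ᵐ y : E3 ∂volume, (‖f y‖₊ : ℝ≥0∞) ≤ eLpNormEssSup f volume :=
      ae_le_eLpNormEssSup
    refine h1.mono fun y hy => ?_
    have h2 : (‖f y‖₊ : ℝ≥0∞) ≤ Mtop := by rwa [hMtop, eLpNorm_exponent_top]
    have h3 := ENNReal.toReal_mono hf.ne h2
    simpa using h3
  set KF : ℝ≥0∞ := ∫⁻ t in Set.Ioi (0:ℝ),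
    rearr volume V t * ENNReal.ofReal ((c0/t) ^ ((1:ℝ)/3)) with hKFdef
  have hKF : KF ≠ ⊤ := Kfin hV
  set C1 : ℝ≥0∞ := ENNReal.ofReal ((4*Real.pi)⁻¹) with hC1
  have hC1top : C1 ≠ ⊤ := ENNReal.ofReal_ne_top
  set CM : ℝ≥0∞ := C1 * Mtop with hCM
  have hCMtop : CM ≠ ⊤ := ENNReal.mul_ne_top hC1top hf.ne
  -- pointwise bound
  have hgnorm1 : ∀ x y : E3, ‖g x y‖ = (4*Real.pi)⁻¹ * ‖x-y‖⁻¹ * ‖V y‖ * ‖f y‖ := by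
    intro x y
    rw [hgdef]
    simp only [norm_mul]
    rw [resKer_norm]
  have hgnorm : ∀ x y : E3, ‖f y‖ ≤ Mr → (‖g x y‖₊ : ℝ≥0∞)
      ≤ CM * ((‖V y‖₊ : ℝ≥0∞) * (ENNReal.ofReal ‖x - y‖)⁻¹) := by
    intro x y hfy
    calc (‖g x y‖₊ : ℝ≥0∞) = ENNReal.ofReal ‖g x y‖ := (ofReal_norm_eq_coe_nnnorm _).symm
      _ ≤ ENNReal.ofReal ((4*Real.pi)⁻¹ * ‖x-y‖⁻¹ * ‖V y‖ * Mr) := by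
          rw [hgnorm1 x y]
          refine ENNReal.ofReal_le_ofReal ?_
          have hn : (0:ℝ) ≤ (4*Real.pi)⁻¹ * ‖x-y‖⁻¹ * ‖V y‖ := by positivity
          exact mul_le_mul_of_nonneg_left hfy hn
      _ ≤ CM * ((‖V y‖₊ : ℝ≥0∞) * (ENNReal.ofReal ‖x - y‖)⁻¹) := by
          rw [ENNReal.ofReal_mul (by positivity), ENNReal.ofReal_mul (by positivity),
            ENNReal.ofReal_mul (by positivity)]
          calc ENNReal.ofReal ((4*Real.pi)⁻¹) * ENNReal.ofReal (‖x-y‖⁻¹)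
                * ENNReal.ofReal ‖V y‖ * ENNReal.ofReal Mr
              ≤ C1 * (ENNReal.ofReal ‖x-y‖)⁻¹ * (‖V y‖₊ : ℝ≥0∞) * Mtop := by
                refine mul_le_mul' (mul_le_mul' (mul_le_mul' le_rfl (ofReal_inv_le _))
                  (le_of_eq (ofReal_norm_eq_coe_nnnorm _))) ?_
                rw [hMrdef]
                exact ENNReal.ofReal_toReal_le
            _ = CM * ((‖V y‖₊ : ℝ≥0∞) * (ENNReal.ofReal ‖x-y‖)⁻¹) := by rw [hCM]; ring
  have hsetbound : ∀ (x : E3) (S : Set E3), (∫⁻ y in S, (‖g x y‖₊ : ℝ≥0∞))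
      ≤ CM * ∫⁻ y in S, (‖V y‖₊ : ℝ≥0∞) * (ENNReal.ofReal ‖x - y‖)⁻¹ := by
    intro x S
    rw [← lintegral_const_mul' _ _ hCMtop]
    refine lintegral_mono_ae ?_
    exact ae_restrict_of_ae (hfae.mono fun y hy => hgnorm x y hy)
  have hVk : ∀ x : E3, (∫⁻ y, (‖V y‖₊ : ℝ≥0∞) * (ENNReal.ofReal ‖x - y‖)⁻¹) ≤ KF :=
    fun x => master V hVmeas x
  have hgmeas : ∀ x, Measurable (g x) := fun x => ((resKer_meas η x).mul hVmeas).mul hfmeas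
  have hgint : ∀ x, Integrable (g x) volume := by
    intro x
    refine ⟨(hgmeas x).aestronglyMeasurable, ?_⟩
    have hb : (∫⁻ y, (‖g x y‖₊ : ℝ≥0∞)) < ⊤ := by
      calc (∫⁻ y, (‖g x y‖₊ : ℝ≥0∞))
          ≤ CM * ∫⁻ y, (‖V y‖₊ : ℝ≥0∞) * (ENNReal.ofReal ‖x - y‖)⁻¹ := by
            simpa [Measure.restrict_univ] using hsetbound x Set.univ
        _ ≤ CM * KF := mul_le_mul_right (hVk x) _
        _ < ⊤ := (ENNReal.mul_ne_top hCMtop hKF).lt_top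
    exact hb
  have hnormint : ∀ (x : E3) (S : Set E3), ‖∫ y in S, g x y‖
      ≤ (∫⁻ y in S, (‖g x y‖₊ : ℝ≥0∞)).toReal := by
    intro x S
    have h := norm_integral_le_lintegral_norm (μ := volume.restrict S) (g x)
    have h2 : (∫⁻ y in S, ENNReal.ofReal ‖g x y‖) = ∫⁻ y in S, (‖g x y‖₊ : ℝ≥0∞) :=
      lintegral_congr fun y => ofReal_norm_eq_coe_nnnorm _
    rw [h2] at h
    exact h
  have hmul : ∀ {c : ℝ}, 0 < c → ∀ {X : ℝ≥0∞}, X < ENNReal.ofReal c / (CM+1) →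
      CM * X ≤ ENNReal.ofReal c := by
    intro c hc X hX
    calc CM * X ≤ CM * (ENNReal.ofReal c / (CM+1)) := mul_le_mul_right hX.le _
      _ ≤ (CM+1) * (ENNReal.ofReal c / (CM+1)) := mul_le_mul_left le_self_add _
      _ = ENNReal.ofReal c := ENNReal.mul_div_cancel
          (lt_of_lt_of_le zero_lt_one le_add_self).ne'
          (ENNReal.add_ne_top.2 ⟨hCMtop, ENNReal.one_ne_top⟩)
  have hdivpos : ∀ {c : ℝ}, 0 < c → (0:ℝ≥0∞) < ENNReal.ofReal c / (CM+1) :=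
    fun hc => ENNReal.div_pos (ENNReal.ofReal_pos.2 hc).ne'
      (ENNReal.add_ne_top.2 ⟨hCMtop, ENNReal.one_ne_top⟩)
  constructor
  · -- Continuity
    rw [continuous_iff_continuousAt]
    intro x₀
    have key : Tendsto (fun x => ∫ y, g x y) (𝓝 x₀) (𝓝 (∫ y, g x₀ y)) := by
      rw [Metric.tendsto_nhds]
      intro ε hε
      obtain ⟨m, hm0, hmlt⟩ := shrink
        (fun t => rearr volume V t * ENNReal.ofReal ((c0/t) ^ ((1:ℝ)/3)))
        (by rw [← hKFdef]; exact hKF) (hdivpos (by linarith : (0:ℝ) < ε/8))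
      set ρ : ℝ := ((m/c0) ^ ((1:ℝ)/3))/3 with hρdef
      have hρ0 : 0 < ρ := by
        have h := Real.rpow_pos_of_pos (div_pos hm0 c0_pos) ((1:ℝ)/3)
        rw [hρdef]
        positivity
      have h3ρ : c0 * (3*ρ) ^ 3 = m := by
        have h1 : 3 * ρ = (m/c0) ^ ((1:ℝ)/3) := by rw [hρdef]; ring
        rw [h1, ← Real.rpow_natCast ((m/c0) ^ ((1:ℝ)/3)) 3,
          ← Real.rpow_mul (div_nonneg hm0.le c0_pos.le)]
        have he : ((1:ℝ)/3) * ((3:ℕ):ℝ) = 1 := by norm_num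
        rw [he, Real.rpow_one, mul_comm, div_mul_cancel₀ _ c0_pos.ne']
      set S : Set E3 := ball x₀ (2*ρ) with hSdef
      have hSmeas : MeasurableSet S := measurableSet_ball
      have hsplit : ∀ x, (∫ y, g x y) = (∫ y in S, g x y) + (∫ y in Sᶜ, g x y) :=
        fun x => (integral_add_compl hSmeas (hgint x)).symm
      have hHsmall : ∀ x ∈ ball x₀ ρ, ‖∫ y in S, g x y‖ ≤ ε/8 := by
        intro x hx
        refine le_trans (hnormint x S) ?_
        refine ENNReal.toReal_le_of_le_ofReal (by linarith) ?_
        calc (∫⁻ y in S, (‖g x y‖₊ : ℝ≥0∞))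
            ≤ CM * ∫⁻ y in S, (‖V y‖₊ : ℝ≥0∞) * (ENNReal.ofReal ‖x - y‖)⁻¹ := hsetbound x S
          _ ≤ CM * ∫⁻ y in ball x (3*ρ),
                (‖V y‖₊ : ℝ≥0∞) * (ENNReal.ofReal ‖x - y‖)⁻¹ := by
              refine mul_le_mul_right (lintegral_mono_set ?_) _
              rw [hSdef]
              refine ball_subset_ball' ?_
              have hd : dist x₀ x < ρ := by rw [dist_comm]; exact mem_ball.1 hx
              linarith
          _ ≤ CM * ∫⁻ t in Set.Ioo 0 (c0 * (3*ρ) ^ 3),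
                rearr volume V t * ENNReal.ofReal ((c0/t) ^ ((1:ℝ)/3)) :=
              mul_le_mul_right (master_ball V hVmeas x (by linarith)) _
          _ = CM * ∫⁻ t in Set.Ioo 0 m,
                rearr volume V t * ENNReal.ofReal ((c0/t) ^ ((1:ℝ)/3)) := by rw [h3ρ]
          _ ≤ ENNReal.ofReal (ε/8) := hmul (by linarith) hmlt
      have hGtend : Tendsto (fun x => ∫ y in Sᶜ, g x y) (𝓝 x₀)
          (𝓝 (∫ y in Sᶜ, g x₀ y)) := by
        set b : E3 → ℝ := fun y => (2*Mr*(4*Real.pi)⁻¹) * (‖V y‖ * ‖x₀ - y‖⁻¹) with hb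
        have hVinvmeas : Measurable (fun y : E3 => ‖V y‖ * ‖x₀ - y‖⁻¹) :=
          hVmeas.norm.mul ((measurable_const.sub measurable_id).norm.inv)
        have hVinv_int : Integrable (fun y : E3 => ‖V y‖ * ‖x₀ - y‖⁻¹)
            (volume.restrict Sᶜ) := by
          refine ⟨hVinvmeas.aestronglyMeasurable, ?_⟩
          have hfin : (∫⁻ y in Sᶜ, (‖(‖V y‖ * ‖x₀ - y‖⁻¹ : ℝ)‖₊ : ℝ≥0∞)) < ⊤ := by
            have hpw : ∀ y : E3, (‖(‖V y‖ * ‖x₀ - y‖⁻¹ : ℝ)‖₊ : ℝ≥0∞)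
                ≤ (‖V y‖₊ : ℝ≥0∞) * (ENNReal.ofReal ‖x₀ - y‖)⁻¹ := by
              intro y
              rw [← ofReal_norm_eq_coe_nnnorm, Real.norm_eq_abs,
                _root_.abs_of_nonneg (by positivity), ENNReal.ofReal_mul (norm_nonneg _)]
              exact mul_le_mul' (le_of_eq (ofReal_norm_eq_coe_nnnorm _)) (ofReal_inv_le _)
            calc (∫⁻ y in Sᶜ, (‖(‖V y‖ * ‖x₀ - y‖⁻¹ : ℝ)‖₊ : ℝ≥0∞))
                ≤ ∫⁻ y in Sᶜ, (‖V y‖₊ : ℝ≥0∞) * (ENNReal.ofReal ‖x₀ - y‖)⁻¹ :=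
                  lintegral_mono fun y => hpw y
              _ ≤ ∫⁻ y, (‖V y‖₊ : ℝ≥0∞) * (ENNReal.ofReal ‖x₀ - y‖)⁻¹ :=
                  setLIntegral_le_lintegral _ _
              _ ≤ KF := hVk x₀
              _ < ⊤ := hKF.lt_top
          exact hfin
        have hbint : Integrable b (volume.restrict Sᶜ) := hVinv_int.const_mul _
        refine tendsto_integral_filter_of_dominated_convergence b
          (Eventually.of_forall fun x => (hgmeas x).aestronglyMeasurable) ?_ hbint ?_
        · refine eventually_of_mem (ball_mem_nhds x₀ hρ0) fun x hx => ?_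
          have hae1 : ∀ᵐ y ∂volume.restrict Sᶜ, y ∈ Sᶜ := ae_restrict_mem hSmeas.compl
          have hae2 : ∀ᵐ y ∂volume.restrict Sᶜ, ‖f y‖ ≤ Mr := ae_restrict_of_ae hfae
          filter_upwards [hae1, hae2] with y hy1 hy2
          have hdist : 2*ρ ≤ dist y x₀ := by
            by_contra hc
            exact hy1 (mem_ball.2 (by linarith [not_le.1 hc]))
          have hxx0 : dist x x₀ < ρ := mem_ball.1 hx
          have hlow : dist y x₀ / 2 ≤ dist x y := by
            have htri : dist y x₀ ≤ dist y x + dist x x₀ := dist_triangle _ _ _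
            rw [dist_comm x y]
            linarith
          have hpos : (0:ℝ) < dist y x₀ := lt_of_lt_of_le (by linarith) hdist
          have hnormxy : ‖x - y‖ = dist x y := by rw [dist_eq_norm]
          have hnormx0y : ‖x₀ - y‖ = dist x₀ y := by rw [dist_eq_norm]
          rw [hgnorm1 x y, hb]
          have hinv : ‖x - y‖⁻¹ ≤ 2 * ‖x₀ - y‖⁻¹ := by
            rw [hnormxy, hnormx0y, dist_comm x₀ y]
            have h2 : (dist y x₀ / 2)⁻¹ = 2 * (dist y x₀)⁻¹ := by
              rw [inv_div]
              ring
            calc (dist x y)⁻¹ ≤ (dist y x₀ / 2)⁻¹ :=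
                  inv_anti₀ (by linarith) hlow
              _ = 2 * (dist y x₀)⁻¹ := h2
          calc (4*Real.pi)⁻¹ * ‖x-y‖⁻¹ * ‖V y‖ * ‖f y‖
              ≤ (4*Real.pi)⁻¹ * (2*‖x₀-y‖⁻¹) * ‖V y‖ * Mr := by
                refine mul_le_mul ?_ hy2 (norm_nonneg _) (by positivity)
                refine mul_le_mul_of_nonneg_right ?_ (norm_nonneg _)
                exact mul_le_mul_of_nonneg_left hinv (by positivity)
            _ = (2*Mr*(4*Real.pi)⁻¹) * (‖V y‖ * ‖x₀ - y‖⁻¹) := by ring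
        · have hae1 : ∀ᵐ y ∂volume.restrict Sᶜ, y ∈ Sᶜ := ae_restrict_mem hSmeas.compl
          refine hae1.mono fun y hy => ?_
          have hdist : 2*ρ ≤ dist y x₀ := by
            by_contra hc
            exact hy (mem_ball.2 (by linarith [not_le.1 hc]))
          have hyne : ‖x₀ - y‖ ≠ 0 := by
            have h2 : ‖x₀ - y‖ = dist y x₀ := by rw [dist_eq_norm, norm_sub_rev]
            rw [h2]
            exact (lt_of_lt_of_le (by linarith) hdist).ne'
          have hc1 : Continuous fun x : E3 => ‖x - y‖ :=
            (continuous_id.sub continuous_const).norm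
          have hnum : Continuous fun x : E3 =>
              Complex.exp (Complex.I * (‖η‖:ℂ) * ((‖x - y‖ : ℝ):ℂ)) :=
            (continuous_const.mul (Complex.continuous_ofReal.comp hc1)).cexp
          have hden : Continuous fun x : E3 => ((4*Real.pi*‖x - y‖ : ℝ):ℂ) :=
            Complex.continuous_ofReal.comp (continuous_const.mul hc1)
          have hdenne : ((4*Real.pi*‖x₀ - y‖ : ℝ):ℂ) ≠ 0 := by
            rw [Ne, Complex.ofReal_eq_zero]
            exact mul_ne_zero (by positivity) hyne
          have hca : ContinuousAt (fun x => resKer η x y) x₀ :=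
            ContinuousAt.div hnum.continuousAt hden.continuousAt hdenne
          exact ((hca.mul continuousAt_const).mul continuousAt_const).tendsto
      have hGev := Metric.tendsto_nhds.1 hGtend (ε/2) (by linarith)
      filter_upwards [hGev, ball_mem_nhds x₀ hρ0] with x hG hx
      have e1 := hHsmall x hx
      have e2 := hHsmall x₀ (mem_ball_self hρ0)
      rw [dist_eq_norm] at hG ⊢
      rw [hsplit x, hsplit x₀]
      have heq : ((∫ y in S, g x y) + (∫ y in Sᶜ, g x y))
          - ((∫ y in S, g x₀ y) + (∫ y in Sᶜ, g x₀ y))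
          = ((∫ y in Sᶜ, g x y) - (∫ y in Sᶜ, g x₀ y)) + (∫ y in S, g x y)
            - (∫ y in S, g x₀ y) := by ring
      rw [heq]
      calc ‖((∫ y in Sᶜ, g x y) - (∫ y in Sᶜ, g x₀ y)) + (∫ y in S, g x y)
            - (∫ y in S, g x₀ y)‖
          ≤ ‖((∫ y in Sᶜ, g x y) - (∫ y in Sᶜ, g x₀ y)) + (∫ y in S, g x y)‖
            + ‖∫ y in S, g x₀ y‖ := norm_sub_le _ _
        _ ≤ ‖(∫ y in Sᶜ, g x y) - (∫ y in Sᶜ, g x₀ y)‖ + ‖∫ y in S, g x y‖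
            + ‖∫ y in S, g x₀ y‖ := by gcongr ?_ + _; exact norm_add_le _ _
        _ < ε/2 + ε/8 + ε/8 := by
            refine add_lt_add_of_lt_of_le (add_lt_add_of_lt_of_le hG e1) e2
        _ < ε := by linarith
    exact key
  · -- Decay
    rw [Metric.tendsto_nhds]
    intro ε hε
    obtain ⟨R, hR0, hRlt⟩ := tail_small hVmeas (by rw [← hKFdef]; exact hKF)
      (hdivpos (by linarith : (0:ℝ) < ε/4))
    set W : E3 → ℂ := fun y => if R ≤ ‖y‖ then V y else 0 with hW
    have hWmeas : Measurable W :=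
      Measurable.ite (measurableSet_le measurable_const measurable_norm) hVmeas
        measurable_const
    set LV : ℝ := (∫⁻ y in ball (0:E3) R, (‖V y‖₊ : ℝ≥0∞)).toReal with hLV
    have hLVfin : (∫⁻ y in ball (0:E3) R, (‖V y‖₊ : ℝ≥0∞)) ≠ ⊤ :=
      L1loc hVmeas (by rw [← hKFdef]; exact hKF) hR0
    have hLV0 : 0 ≤ LV := ENNReal.toReal_nonneg
    set B : ℝ := Mr * (4*Real.pi)⁻¹ * LV with hB
    have hB0 : 0 ≤ B := by positivity
    have hsplitR : ∀ x, (∫ y, g x y)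
        = (∫ y in ball (0:E3) R, g x y) + (∫ y in (ball (0:E3) R)ᶜ, g x y) :=
      fun x => (integral_add_compl measurableSet_ball (hgint x)).symm
    have hfar : ∀ x : E3, ‖∫ y in (ball (0:E3) R)ᶜ, g x y‖ ≤ ε/4 := by
      intro x
      refine le_trans (hnormint x _) ?_
      refine ENNReal.toReal_le_of_le_ofReal (by linarith) ?_
      calc (∫⁻ y in (ball (0:E3) R)ᶜ, (‖g x y‖₊ : ℝ≥0∞))
          ≤ CM * ∫⁻ y in (ball (0:E3) R)ᶜ,
              (‖V y‖₊ : ℝ≥0∞) * (ENNReal.ofReal ‖x - y‖)⁻¹ := hsetbound x _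
        _ = CM * ∫⁻ y in (ball (0:E3) R)ᶜ,
              (‖W y‖₊ : ℝ≥0∞) * (ENNReal.ofReal ‖x - y‖)⁻¹ := by
            congr 1
            refine setLIntegral_congr_fun measurableSet_ball.compl
              (fun y hy => ?_)
            have hyR : R ≤ ‖y‖ := by
              by_contra hc
              exact hy (mem_ball_zero_iff.2 (not_le.1 hc))
            rw [hW]
            simp only [hyR, if_true]
        _ ≤ CM * ∫⁻ y, (‖W y‖₊ : ℝ≥0∞) * (ENNReal.ofReal ‖x - y‖)⁻¹ :=
            mul_le_mul_right (setLIntegral_le_lintegral _ _) _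
        _ ≤ CM * ∫⁻ t in Set.Ioi (0:ℝ),
              rearr volume W t * ENNReal.ofReal ((c0/t) ^ ((1:ℝ)/3)) :=
            mul_le_mul_right (master W hWmeas x) _
        _ ≤ ENNReal.ofReal (ε/4) := hmul (by linarith) hRlt
    have hnear : ∀ x : E3, R + 1 + 2*(B+1)/ε ≤ ‖x‖ →
        ‖∫ y in ball (0:E3) R, g x y‖ < ε/2 := by
      intro x hx
      have hden : (0:ℝ) < ‖x‖ - R := by
        have h2 : 0 ≤ 2*(B+1)/ε := by positivity
        linarith
      set cx : ℝ := Mr * (4*Real.pi)⁻¹ * (‖x‖ - R)⁻¹ with hcx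
      have hcx0 : 0 ≤ cx := by positivity
      have hptw : ∀ᵐ y ∂volume.restrict (ball (0:E3) R),
          (‖g x y‖₊ : ℝ≥0∞) ≤ ENNReal.ofReal cx * (‖V y‖₊ : ℝ≥0∞) := by
        have hae1 : ∀ᵐ y ∂volume.restrict (ball (0:E3) R), y ∈ ball (0:E3) R :=
          ae_restrict_mem measurableSet_ball
        have hae2 : ∀ᵐ y ∂volume.restrict (ball (0:E3) R), ‖f y‖ ≤ Mr :=
          ae_restrict_of_ae hfae
        filter_upwards [hae1, hae2] with y hy1 hy2
        have hyR : ‖y‖ < R := mem_ball_zero_iff.1 hy1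
        have hxy : ‖x‖ - R ≤ ‖x - y‖ := by
          have := norm_sub_norm_le x y
          linarith
        have hinv : ‖x - y‖⁻¹ ≤ (‖x‖ - R)⁻¹ := inv_anti₀ hden hxy
        have hnb : ‖g x y‖ ≤ cx * ‖V y‖ := by
          rw [hgnorm1 x y, hcx]
          calc (4*Real.pi)⁻¹ * ‖x-y‖⁻¹ * ‖V y‖ * ‖f y‖
              ≤ (4*Real.pi)⁻¹ * (‖x‖-R)⁻¹ * ‖V y‖ * Mr := by
                refine mul_le_mul ?_ hy2 (norm_nonneg _) (by positivity)
                refine mul_le_mul_of_nonneg_right ?_ (norm_nonneg _)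
                exact mul_le_mul_of_nonneg_left hinv (by positivity)
            _ = Mr * (4*Real.pi)⁻¹ * (‖x‖ - R)⁻¹ * ‖V y‖ := by ring
        calc (‖g x y‖₊ : ℝ≥0∞) = ENNReal.ofReal ‖g x y‖ :=
              (ofReal_norm_eq_coe_nnnorm _).symm
          _ ≤ ENNReal.ofReal (cx * ‖V y‖) := ENNReal.ofReal_le_ofReal hnb
          _ = ENNReal.ofReal cx * (‖V y‖₊ : ℝ≥0∞) := by
              rw [ENNReal.ofReal_mul hcx0, ofReal_norm_eq_coe_nnnorm]
      have hlint : (∫⁻ y in ball (0:E3) R, (‖g x y‖₊ : ℝ≥0∞))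
          ≤ ENNReal.ofReal cx * ∫⁻ y in ball (0:E3) R, (‖V y‖₊ : ℝ≥0∞) := by
        rw [← lintegral_const_mul' _ _ ENNReal.ofReal_ne_top]
        exact lintegral_mono_ae hptw
      have hstep : ‖∫ y in ball (0:E3) R, g x y‖ ≤ B * (‖x‖ - R)⁻¹ := by
        refine le_trans (hnormint x _) ?_
        calc (∫⁻ y in ball (0:E3) R, (‖g x y‖₊ : ℝ≥0∞)).toReal
            ≤ (ENNReal.ofReal cx * ∫⁻ y in ball (0:E3) R, (‖V y‖₊ : ℝ≥0∞)).toReal := by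
              refine ENNReal.toReal_mono ?_ hlint
              exact ENNReal.mul_ne_top ENNReal.ofReal_ne_top hLVfin
          _ = cx * LV := by
              rw [ENNReal.toReal_mul, ENNReal.toReal_ofReal hcx0, hLV]
          _ = B * (‖x‖ - R)⁻¹ := by rw [hcx, hB]; ring
      have hinvle : (‖x‖ - R)⁻¹ ≤ ε/(2*(B+1)) := by
        have h1 : 2*(B+1)/ε ≤ ‖x‖ - R := by linarith
        have h2 : (0:ℝ) < 2*(B+1)/ε := by positivity
        calc (‖x‖ - R)⁻¹ ≤ (2*(B+1)/ε)⁻¹ := inv_anti₀ h2 h1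
          _ = ε/(2*(B+1)) := by rw [inv_div]
      calc ‖∫ y in ball (0:E3) R, g x y‖ ≤ B * (‖x‖ - R)⁻¹ := hstep
        _ ≤ B * (ε/(2*(B+1))) := mul_le_mul_of_nonneg_left hinvle hB0
        _ < ε/2 := by
            rw [mul_div_assoc']
            rw [div_lt_iff₀ (by positivity)]
            nlinarith
    filter_upwards [tendsto_norm_cobounded_atTop.eventually_ge_atTop
      (R + 1 + 2*(B+1)/ε)] with x hx
    rw [dist_zero_right]
    have h1 := hnear x hx
    have h2 := hfar x
    calc ‖∫ y, g x y‖
        = ‖(∫ y in ball (0:E3) R, g x y) + (∫ y in (ball (0:E3) R)ᶜ, g x y)‖ := by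
          rw [hsplitR x]
      _ ≤ ‖∫ y in ball (0:E3) R, g x y‖ + ‖∫ y in (ball (0:E3) R)ᶜ, g x y‖ :=
          norm_add_le _ _
      _ < ε/2 + ε/4 := add_lt_add_of_lt_of_le h1 h2
      _ < ε := by linarith

end
end
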